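/- arXiv:1406.4555 — 2 statements merged into one kernel-verified Lean document; each statement's English description precedes it below -/
import Mathlib

section
/- In the root system of type D_n, for any non-simple positive root γ, the number of unordered pairs {α, β} of positive roots with α + β = γ equals ht(γ) - 1, where ht(γ) = Σ_i n_i for γ = Σ_i n_i α_i. -/
open Finset

/-- Standard basis vector `ε_i` (1-indexed) in the ambient space `ℕ → ℤ`. -/
noncomputable def epsD (i : ℕ) : ℕ → ℤ := Pi.single i 1

/-- Simple roots of type `D_n` (1-indexed). -/
noncomputable def alphaD (n i : ℕ) : ℕ → ℤ :=
  if i = n then epsD (n - 1) + epsD n else epsD i - epsD (i + 1)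

/-- Positive roots of type `D_n`: `ε_i ± ε_j` for `1 ≤ i < j ≤ n`. -/
def IsPosRootD (n : ℕ) (v : ℕ → ℤ) : Prop :=
  ∃ i j : ℕ, 1 ≤ i ∧ i < j ∧ j ≤ n ∧ (v = epsD i - epsD j ∨ v = epsD i + epsD j)

lemma epsD_apply (i k : ℕ) : epsD i k = if k = i then 1 else 0 := Pi.single_apply i 1 k

lemma classify_aux {n i j a b c d : ℕ} {u s t : ℤ} {α β : ℕ → ℤ}
    (hi : 1 ≤ i) (hij : i < j) (hjn : j ≤ n)
    (hab : a < b) (hbn : b ≤ n)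
    (hcd : c < d) (hdn : d ≤ n)
    (hac : a ≤ c)
    (hu : u = 1 ∨ u = -1) (hs : s = 1 ∨ s = -1) (ht : t = 1 ∨ t = -1)
    (hα : α = epsD a + s • epsD b) (hβ : β = epsD c + t • epsD d)
    (hsum : α + β = epsD i + u • epsD j) :
    (∃ k, i < k ∧ k < j ∧ k ≤ n ∧ α = epsD i - epsD k ∧ β = epsD k + u • epsD j) ∨
    (u = 1 ∧ ∃ k, j < k ∧ k ≤ n ∧
      ((α = epsD i - epsD k ∧ β = epsD j + epsD k) ∨
       (α = epsD i + epsD k ∧ β = epsD j - epsD k))) := by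
  subst hα hβ
  have E : ∀ x : ℕ, ((if x = a then (1:ℤ) else 0) + s * (if x = b then 1 else 0))
      + ((if x = c then 1 else 0) + t * (if x = d then 1 else 0))
      = (if x = i then 1 else 0) + u * (if x = j then 1 else 0) := by
    intro x
    have := congrFun hsum x
    simpa [epsD_apply] using this
  -- step 0: a < c
  have hac' : a < c := by
    rcases Nat.lt_or_ge a c with h | h
    · exact h
    have hce : a = c := by omega
    have h1 := E a
    simp only [eq_self_iff_true, if_true, if_neg (show a ≠ b by omega),
      if_neg (show a ≠ d by omega), ← hce, mul_zero, add_zero] at h1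
    rcases hu with rfl | rfl <;> split_ifs at h1 <;> omega
  -- step 1: a = i
  have hai : a = i := by
    by_contra hne
    have h1 := E a
    simp only [eq_self_iff_true, if_true, if_neg (show a ≠ b by omega),
      if_neg (show a ≠ c by omega), if_neg (show a ≠ d by omega), if_neg hne,
      mul_zero, add_zero, zero_add] at h1
    have haj : a = j ∧ u = 1 := by
      rcases hu with rfl | rfl <;> split_ifs at h1 <;> omega
    obtain ⟨haj, rfl⟩ := haj
    have h2 := E i
    simp only [eq_self_iff_true, if_true, if_neg (show i ≠ a by omega),
      if_neg (show i ≠ b by omega), if_neg (show i ≠ c by omega),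
      if_neg (show i ≠ d by omega), if_neg (show i ≠ j by omega),
      mul_zero, add_zero, zero_add, mul_one] at h2
    omega
  subst hai
  -- now i is replaced by a
  by_cases hbc : c = b
  · subst hbc
    -- b replaced by c
    have h1 := E d
    simp only [eq_self_iff_true, if_true, if_neg (show d ≠ a by omega),
      if_neg (show d ≠ c by omega), mul_zero, add_zero, zero_add, mul_one] at h1
    have hdj : d = j ∧ t = u := by
      rcases hu with rfl | rfl <;> rcases ht with rfl | rfl <;> split_ifs at h1 <;> omega
    obtain ⟨rfl, rfl⟩ := hdj
    -- j replaced by d, u replaced by t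
    have h2 := E c
    simp only [eq_self_iff_true, if_true, if_neg (show c ≠ a by omega),
      if_neg (show c ≠ d by omega), mul_zero, add_zero, zero_add, mul_one] at h2
    have hs' : s = -1 := by omega
    subst hs'
    exact Or.inl ⟨c, hab, hcd, hbn, by module, rfl⟩
  · have h1 := E c
    simp only [eq_self_iff_true, if_true, if_neg (show c ≠ a by omega),
      if_neg (show c ≠ b from hbc), if_neg (show c ≠ d by omega),
      mul_zero, add_zero, zero_add, mul_one] at h1
    have hcj : c = j ∧ u = 1 := by
      rcases hu with rfl | rfl <;> split_ifs at h1 <;> omega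
    obtain ⟨rfl, rfl⟩ := hcj
    -- j replaced by c, u replaced by 1
    have h2 := E b
    simp only [eq_self_iff_true, if_true, if_neg (show b ≠ a by omega),
      if_neg (show b ≠ c from fun h => hbc h.symm), mul_zero, add_zero, zero_add,
      mul_one, one_mul] at h2
    have hbd : b = d ∧ t = -s := by
      rcases hs with rfl | rfl <;> rcases ht with rfl | rfl <;> split_ifs at h2 <;> omega
    obtain ⟨rfl, rfl⟩ := hbd
    -- d replaced by b, t replaced by -s
    refine Or.inr ⟨rfl, b, hcd, hbn, ?_⟩
    rcases hs with rfl | rfl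
    · exact Or.inr ⟨by module, by module⟩
    · exact Or.inl ⟨by module, by module⟩

lemma toForm {n : ℕ} {α : ℕ → ℤ} (h : IsPosRootD n α) :
    ∃ a b : ℕ, ∃ s : ℤ, 1 ≤ a ∧ a < b ∧ b ≤ n ∧ (s = 1 ∨ s = -1) ∧
      α = epsD a + s • epsD b := by
  obtain ⟨a, b, h1, h2, h3, h4 | h4⟩ := h
  · exact ⟨a, b, -1, h1, h2, h3, Or.inr rfl, by rw [h4]; module⟩
  · exact ⟨a, b, 1, h1, h2, h3, Or.inl rfl, by rw [h4]; module⟩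

lemma classify {n i j : ℕ} {u : ℤ} {α β : ℕ → ℤ} (hi : 1 ≤ i) (hij : i < j) (hjn : j ≤ n)
    (hu : u = 1 ∨ u = -1) (hα : IsPosRootD n α) (hβ : IsPosRootD n β)
    (hsum : α + β = epsD i + u • epsD j) :
    (∃ k, i < k ∧ k < j ∧ k ≤ n ∧ s(α, β) = s(epsD i - epsD k, epsD k + u • epsD j)) ∨
    (u = 1 ∧ ∃ k, j < k ∧ k ≤ n ∧
      (s(α, β) = s(epsD i - epsD k, epsD j + epsD k) ∨
       s(α, β) = s(epsD i + epsD k, epsD j - epsD k))) := by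
  obtain ⟨a, b, s, ha1, hab, hbn, hs, hαf⟩ := toForm hα
  obtain ⟨c, d, t, hc1, hcd, hdn, ht, hβf⟩ := toForm hβ
  rcases Nat.le_total a c with hac | hca
  · rcases classify_aux hi hij hjn hab hbn hcd hdn hac hu hs ht hαf hβf hsum with
      ⟨k, h1, h2, h3, h4, h5⟩ | ⟨h0, k, h1, h2, h3⟩
    · exact Or.inl ⟨k, h1, h2, h3, by rw [h4, h5]⟩
    · refine Or.inr ⟨h0, k, h1, h2, ?_⟩
      rcases h3 with ⟨h4, h5⟩ | ⟨h4, h5⟩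
      · exact Or.inl (by rw [h4, h5])
      · exact Or.inr (by rw [h4, h5])
  · have hsum' : β + α = epsD i + u • epsD j := by rw [add_comm]; exact hsum
    rcases classify_aux hi hij hjn hcd hdn hab hbn hca hu ht hs hβf hαf hsum' with
      ⟨k, h1, h2, h3, h4, h5⟩ | ⟨h0, k, h1, h2, h3⟩
    · exact Or.inl ⟨k, h1, h2, h3, by rw [Sym2.eq_swap, h4, h5]⟩
    · refine Or.inr ⟨h0, k, h1, h2, ?_⟩
      rcases h3 with ⟨h4, h5⟩ | ⟨h4, h5⟩
      · exact Or.inl (by rw [Sym2.eq_swap, h4, h5])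
      · exact Or.inr (by rw [Sym2.eq_swap, h4, h5])

lemma isPos_sub {n i k : ℕ} (hi : 1 ≤ i) (hik : i < k) (hkn : k ≤ n) :
    IsPosRootD n (epsD i - epsD k) := ⟨i, k, hi, hik, hkn, Or.inl rfl⟩

lemma isPos_add {n i k : ℕ} (hi : 1 ≤ i) (hik : i < k) (hkn : k ≤ n) :
    IsPosRootD n (epsD i + epsD k) := ⟨i, k, hi, hik, hkn, Or.inr rfl⟩

noncomputable instance : DecidableEq (ℕ → ℤ) := Classical.decEq _

lemma count_minus {n i j : ℕ} (hi : 1 ≤ i) (hij : i < j) (hjn : j ≤ n) :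
    {p : Sym2 (ℕ → ℤ) | ∃ α β : ℕ → ℤ, p = s(α, β) ∧ IsPosRootD n α ∧ IsPosRootD n β ∧
      α + β = epsD i - epsD j}.ncard = j - i - 1 := by
  have hset : {p : Sym2 (ℕ → ℤ) | ∃ α β : ℕ → ℤ, p = s(α, β) ∧ IsPosRootD n α ∧
      IsPosRootD n β ∧ α + β = epsD i - epsD j}
      = ↑((Ioo i j).image fun k => s(epsD i - epsD k, epsD k - epsD j)) := by
    ext p
    simp only [Set.mem_setOf_eq, Finset.coe_image, Set.mem_image, Finset.mem_coe, mem_Ioo]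
    constructor
    · rintro ⟨α, β, rfl, hα, hβ, hsum⟩
      have hsum' : α + β = epsD i + (-1 : ℤ) • epsD j := by rw [hsum]; module
      rcases classify hi hij hjn (Or.inr rfl) hα hβ hsum' with ⟨k, h1, h2, h3, h4⟩ | ⟨h0, _⟩
      · refine ⟨k, ⟨h1, h2⟩, ?_⟩
        have e2 : epsD k + (-1 : ℤ) • epsD j = epsD k - epsD j := by module
        rw [h4, e2]
      · exact absurd h0 (by norm_num)
    · rintro ⟨k, ⟨h1, h2⟩, rfl⟩
      exact ⟨_, _, rfl, isPos_sub hi h1 (by omega), isPos_sub (by omega) h2 hjn, by module⟩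
  rw [hset, Set.ncard_coe_finset, Finset.card_image_of_injOn, Nat.card_Ioo]
  intro k hk k' hk' h
  simp only [mem_coe, mem_Ioo] at hk hk'
  rcases Sym2.eq_iff.mp h with ⟨h1, h2⟩ | ⟨h1, h2⟩
  · have := congrFun h2 k
    simp only [Pi.sub_apply, epsD_apply] at this
    split_ifs at this <;> omega
  · have := congrFun h1 i
    simp only [Pi.sub_apply, epsD_apply] at this
    split_ifs at this <;> omega

lemma count_plus {n i j : ℕ} (hi : 1 ≤ i) (hij : i < j) (hjn : j ≤ n) :
    {p : Sym2 (ℕ → ℤ) | ∃ α β : ℕ → ℤ, p = s(α, β) ∧ IsPosRootD n α ∧ IsPosRootD n β ∧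
      α + β = epsD i + epsD j}.ncard = (j - i - 1) + ((n - j) + (n - j)) := by
  classical
  set F1 := (Ioo i j).image (fun k => s(epsD i - epsD k, epsD k + epsD j)) with hF1
  set F2 := (Ioc j n).image (fun k => s(epsD i - epsD k, epsD j + epsD k)) with hF2
  set F3 := (Ioc j n).image (fun k => s(epsD i + epsD k, epsD j - epsD k)) with hF3
  have hset : {p : Sym2 (ℕ → ℤ) | ∃ α β : ℕ → ℤ, p = s(α, β) ∧ IsPosRootD n α ∧
      IsPosRootD n β ∧ α + β = epsD i + epsD j} = ↑(F1 ∪ (F2 ∪ F3)) := by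
    ext p
    simp only [Set.mem_setOf_eq, coe_union, Set.mem_union, hF1, hF2, hF3, coe_image,
      Set.mem_image, mem_coe, mem_Ioo, mem_Ioc]
    constructor
    · rintro ⟨α, β, rfl, hα, hβ, hsum⟩
      have hsum' : α + β = epsD i + (1 : ℤ) • epsD j := by rw [hsum]; module
      rcases classify hi hij hjn (Or.inl rfl) hα hβ hsum' with
        ⟨k, h1, h2, h3, h4⟩ | ⟨_, k, h1, h2, h3 | h3⟩
      · refine Or.inl ⟨k, ⟨h1, h2⟩, ?_⟩
        have e2 : epsD k + (1 : ℤ) • epsD j = epsD k + epsD j := by module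
        rw [h4, e2]
      · exact Or.inr (Or.inl ⟨k, ⟨h1, h2⟩, h3.symm ▸ rfl⟩)
      · exact Or.inr (Or.inr ⟨k, ⟨h1, h2⟩, h3.symm ▸ rfl⟩)
    · rintro (⟨k, ⟨h1, h2⟩, rfl⟩ | ⟨k, ⟨h1, h2⟩, rfl⟩ | ⟨k, ⟨h1, h2⟩, rfl⟩)
      · exact ⟨_, _, rfl, isPos_sub hi h1 (by omega), isPos_add (by omega) h2 hjn, by module⟩
      · exact ⟨_, _, rfl, isPos_sub hi (by omega) h2, isPos_add (by omega) h1 h2, by module⟩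
      · exact ⟨_, _, rfl, isPos_add hi (by omega) h2, isPos_sub (by omega) h1 h2, by module⟩
  have hd23 : Disjoint F2 F3 := by
    simp only [Finset.disjoint_left, hF2, hF3, mem_image]
    rintro p ⟨k, hk, rfl⟩ ⟨k', hk', hp⟩
    simp only [mem_Ioc] at hk hk'
    rcases Sym2.eq_iff.mp hp with ⟨h1, h2⟩ | ⟨h1, h2⟩
    · have := congrFun h1 k'
      simp only [Pi.sub_apply, Pi.add_apply, epsD_apply] at this
      split_ifs at this <;> omega
    · have := congrFun h1 i
      simp only [Pi.sub_apply, Pi.add_apply, epsD_apply] at this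
      split_ifs at this <;> omega
  have hd12 : Disjoint F1 F2 := by
    simp only [Finset.disjoint_left, hF1, hF2, mem_image]
    rintro p ⟨k, hk, rfl⟩ ⟨k', hk', hp⟩
    simp only [mem_Ioo] at hk
    simp only [mem_Ioc] at hk'
    rcases Sym2.eq_iff.mp hp with ⟨h1, h2⟩ | ⟨h1, h2⟩
    · have := congrFun h1 k'
      simp only [Pi.sub_apply, Pi.add_apply, epsD_apply] at this
      split_ifs at this <;> omega
    · have := congrFun h1 j
      simp only [Pi.sub_apply, Pi.add_apply, epsD_apply] at this
      split_ifs at this <;> omega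
  have hd13 : Disjoint F1 F3 := by
    simp only [Finset.disjoint_left, hF1, hF3, mem_image]
    rintro p ⟨k, hk, rfl⟩ ⟨k', hk', hp⟩
    simp only [mem_Ioo] at hk
    simp only [mem_Ioc] at hk'
    rcases Sym2.eq_iff.mp hp with ⟨h1, h2⟩ | ⟨h1, h2⟩
    · have := congrFun h1 k'
      simp only [Pi.sub_apply, Pi.add_apply, epsD_apply] at this
      split_ifs at this <;> omega
    · have := congrFun h1 i
      simp only [Pi.sub_apply, Pi.add_apply, epsD_apply] at this
      split_ifs at this <;> omega
  have hinj1 : (F1).card = j - i - 1 := by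
    rw [hF1, Finset.card_image_of_injOn, Nat.card_Ioo]
    intro k hk k' hk' h
    simp only [mem_coe, mem_Ioo] at hk hk'
    rcases Sym2.eq_iff.mp h with ⟨h1, h2⟩ | ⟨h1, h2⟩
    · have := congrFun h1 k
      simp only [Pi.sub_apply, epsD_apply] at this
      split_ifs at this <;> omega
    · have := congrFun h1 i
      simp only [Pi.sub_apply, Pi.add_apply, epsD_apply] at this
      split_ifs at this <;> omega
  have hinj2 : (F2).card = n - j := by
    rw [hF2, Finset.card_image_of_injOn, Nat.card_Ioc]
    intro k hk k' hk' h
    simp only [mem_coe, mem_Ioc] at hk hk'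
    rcases Sym2.eq_iff.mp h with ⟨h1, h2⟩ | ⟨h1, h2⟩
    · have := congrFun h1 k
      simp only [Pi.sub_apply, epsD_apply] at this
      split_ifs at this <;> omega
    · have := congrFun h1 i
      simp only [Pi.sub_apply, Pi.add_apply, epsD_apply] at this
      split_ifs at this <;> omega
  have hinj3 : (F3).card = n - j := by
    rw [hF3, Finset.card_image_of_injOn, Nat.card_Ioc]
    intro k hk k' hk' h
    simp only [mem_coe, mem_Ioc] at hk hk'
    rcases Sym2.eq_iff.mp h with ⟨h1, h2⟩ | ⟨h1, h2⟩
    · have := congrFun h1 k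
      simp only [Pi.add_apply, epsD_apply] at this
      split_ifs at this <;> omega
    · have := congrFun h1 i
      simp only [Pi.sub_apply, Pi.add_apply, epsD_apply] at this
      split_ifs at this <;> omega
  rw [hset, Set.ncard_coe_finset, Finset.card_union_of_disjoint
      (by exact Finset.disjoint_union_right.mpr ⟨hd12, hd13⟩),
    Finset.card_union_of_disjoint hd23, hinj1, hinj2, hinj3]

lemma sum_weight_single (n m : ℕ) :
    ∑ k ∈ Icc 1 (n-1), ((n:ℤ) - k) * epsD m k
      = if m ∈ Icc 1 (n-1) then (n:ℤ) - m else 0 := by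
  simp only [epsD_apply, mul_ite, mul_one, mul_zero]
  exact Finset.sum_ite_eq' (Icc 1 (n-1)) m (fun k => (n:ℤ) - k)

lemma weight_alpha {n m : ℕ} (hn : 4 ≤ n) (hm1 : 1 ≤ m) (hmn : m ≤ n) :
    ∑ k ∈ Icc 1 (n-1), ((n:ℤ) - k) * alphaD n m k = 1 := by
  unfold alphaD
  by_cases h : m = n
  · subst h
    simp only [eq_self_iff_true, ite_true, if_true]
    have e : ∀ k, ((m:ℤ)-k) * (epsD (m-1) + epsD m) k
        = ((m:ℤ)-k) * epsD (m-1) k + ((m:ℤ)-k) * epsD m k := by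
      intro k; simp only [Pi.add_apply]; ring
    rw [Finset.sum_congr rfl (fun k _ => e k), Finset.sum_add_distrib,
      sum_weight_single, sum_weight_single]
    simp only [mem_Icc]
    split_ifs <;> omega
  · simp only [if_neg h]
    have e : ∀ k, ((n:ℤ)-k) * (epsD m - epsD (m+1)) k
        = ((n:ℤ)-k) * epsD m k - ((n:ℤ)-k) * epsD (m+1) k := by
      intro k; simp only [Pi.sub_apply]; ring
    rw [Finset.sum_congr rfl (fun k _ => e k), Finset.sum_sub_distrib,
      sum_weight_single, sum_weight_single]
    simp only [mem_Icc]
    split_ifs <;> omega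

lemma ht_eq {n : ℕ} (hn : 4 ≤ n) (c : ℕ → ℕ) (γ : ℕ → ℤ)
    (hc : γ = ∑ i ∈ Icc 1 n, (c i : ℤ) • alphaD n i) :
    ∑ k ∈ Icc 1 (n-1), ((n:ℤ) - k) * γ k = ∑ i ∈ Icc 1 n, (c i : ℤ) := by
  subst hc
  have e : ∀ k, (∑ i ∈ Icc 1 n, (c i : ℤ) • alphaD n i) k
      = ∑ i ∈ Icc 1 n, (c i : ℤ) * alphaD n i k := by
    intro k; rw [Finset.sum_apply]; simp [Pi.smul_apply, smul_eq_mul]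
  calc ∑ k ∈ Icc 1 (n-1), ((n:ℤ)-k) * (∑ i ∈ Icc 1 n, (c i : ℤ) • alphaD n i) k
      = ∑ k ∈ Icc 1 (n-1), ∑ i ∈ Icc 1 n, (c i : ℤ) * (((n:ℤ)-k) * alphaD n i k) := by
        refine Finset.sum_congr rfl fun k _ => ?_
        rw [e k, Finset.mul_sum]
        exact Finset.sum_congr rfl fun i _ => by ring
    _ = ∑ i ∈ Icc 1 n, (c i : ℤ) * ∑ k ∈ Icc 1 (n-1), ((n:ℤ)-k) * alphaD n i k := by
        rw [Finset.sum_comm]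
        exact Finset.sum_congr rfl fun i _ => by rw [Finset.mul_sum]
    _ = ∑ i ∈ Icc 1 n, (c i : ℤ) := by
        refine Finset.sum_congr rfl fun i hi => ?_
        rw [weight_alpha hn (mem_Icc.mp hi).1 (mem_Icc.mp hi).2, mul_one]


/-- for any non-simple positive root `γ = Σ n_i α_i` of type `D_n`,
the number of unordered pairs `{α, β}` of positive roots with `α + β = γ`
equals `ht(γ) - 1 = (Σ n_i) - 1`. -/
theorem stmt4 (n : ℕ) (hn : 4 ≤ n) (γ : ℕ → ℤ) (hγ : IsPosRootD n γ)
    (hns : ∀ i, γ ≠ alphaD n i)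
    (c : ℕ → ℕ) (hc : γ = ∑ i ∈ Finset.Icc 1 n, (c i : ℤ) • alphaD n i) :
    {p : Sym2 (ℕ → ℤ) | ∃ α β : ℕ → ℤ, p = s(α, β) ∧
        IsPosRootD n α ∧ IsPosRootD n β ∧ α + β = γ}.ncard
      = (∑ i ∈ Finset.Icc 1 n, c i) - 1 := by
  obtain ⟨i, j, hi, hij, hjn, hform⟩ := hγ
  have hw := ht_eq hn c γ hc
  have hcast : ((∑ i ∈ Finset.Icc 1 n, c i : ℕ) : ℤ) = ∑ i ∈ Finset.Icc 1 n, (c i : ℤ) := by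
    push_cast; rfl
  rw [← hcast] at hw
  rcases hform with rfl | rfl
  · rw [count_minus hi hij hjn]
    have e : ∀ k, ((n:ℤ)-k) * (epsD i - epsD j) k
        = ((n:ℤ)-k) * epsD i k - ((n:ℤ)-k) * epsD j k := by
      intro k; simp only [Pi.sub_apply]; ring
    rw [Finset.sum_congr rfl (fun k _ => e k), Finset.sum_sub_distrib,
      sum_weight_single, sum_weight_single] at hw
    simp only [mem_Icc] at hw
    generalize (∑ i ∈ Finset.Icc 1 n, c i) = S at hw ⊢
    split_ifs at hw <;> omega
  · rw [count_plus hi hij hjn]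
    have e : ∀ k, ((n:ℤ)-k) * (epsD i + epsD j) k
        = ((n:ℤ)-k) * epsD i k + ((n:ℤ)-k) * epsD j k := by
      intro k; simp only [Pi.add_apply]; ring
    rw [Finset.sum_congr rfl (fun k _ => e k), Finset.sum_add_distrib,
      sum_weight_single, sum_weight_single] at hw
    simp only [mem_Icc] at hw
    generalize (∑ i ∈ Finset.Icc 1 n, c i) = S at hw ⊢
    split_ifs at hw <;> omega
end

section
/- In the AR quiver Γ_Q of a Dynkin quiver Q of type D_n, if α and β are positive roots located at vertices (n-1, k) and (n, k) respectively (same horizontal coordinate, levels n-1 and n), then α + β = 2ε_a for some 1 ≤ a ≤ n-1; moreover {α, β} = {ε_a + ε_n, ε_a - ε_n} if ξ_{n-1} = ξ_n, and {α, β} = {ε_a + ε_{n-1}, ε_a - ε_{n-1}} if |ξ_{n-1} - ξ_n| = 2. -/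
open Finset
open scoped Classical

/-- The standard inner product on the span of `ε_1, …, ε_n`. -/
noncomputable def dotD (n : ℕ) (u v : ℕ → ℤ) : ℤ := ∑ k ∈ Finset.Icc 1 n, u k * v k

/-- The simple reflection `s_i` of type `D_n` acting on `ℕ → ℤ`. -/
noncomputable def refD (n i : ℕ) (v : ℕ → ℤ) : ℕ → ℤ :=
  v - dotD n v (alphaD n i) • alphaD n i

/-- The edges of the type `D_n` Dynkin diagram: `i — (i+1)` for `1 ≤ i ≤ n-2`
and `(n-2) — n`. -/
def edgeD (n i j : ℕ) : Prop :=
  (1 ≤ i ∧ i + 1 = j ∧ j ≤ n - 1) ∨ (1 ≤ j ∧ j + 1 = i ∧ i ≤ n - 1) ∨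
  (i = n - 2 ∧ j = n) ∨ (i = n ∧ j = n - 2)

/-- The composition `s_{i_1} ∘ s_{i_2} ∘ ⋯ ∘ s_{i_r}` for a word `L = [i_1, …, i_r]`;
for an enumeration of the vertices adapted to `Q` this is the Coxeter element `τ`
adapted to `Q`. -/
noncomputable def coxD (n : ℕ) (L : List ℕ) : (ℕ → ℤ) → ℕ → ℤ :=
  L.foldr (fun i f => refD n i ∘ f) id

/-- `η_i = Σ_{j ∈ B(i)} α_j`, where `B(i)` is the set of vertices `j` admitting a
path from `j` to `i` in the quiver `ar`. -/
noncomputable def etaD (n : ℕ) (ar : ℕ → ℕ → Prop) (i : ℕ) : ℕ → ℤ :=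
  ∑ j ∈ Finset.Icc 1 n, if Relation.ReflTransGen ar j i then alphaD n j else 0

/-- `β` is located at the vertex `(i, p)` of the AR quiver `Γ_Q` (level `i`,
horizontal coordinate `p`): the vertices of `Γ_Q` at level `i` are
`(i, ξ_i - 2k) ↦ τ^k(η_i)` for the `k ≥ 0` with `τ^k(η_i)` a positive root. -/
def LocatedAt (n : ℕ) (ar : ℕ → ℕ → Prop) (L : List ℕ) (ξ : ℕ → ℤ)
    (β : ℕ → ℤ) (i : ℕ) (p : ℤ) : Prop :=
  ∃ k : ℕ, IsPosRootD n β ∧ β = (coxD n L)^[k] (etaD n ar i) ∧ p = ξ i - 2 * k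

namespace Stmt11

lemma epsD_apply (i k : ℕ) : epsD i k = if k = i then 1 else 0 := Pi.single_apply i 1 k

lemma dotD_eps_fst {n m : ℕ} (h1 : 1 ≤ m) (h2 : m ≤ n) (v : ℕ → ℤ) :
    dotD n (epsD m) v = v m := by
  unfold dotD
  rw [Finset.sum_eq_single m]
  · simp [epsD_apply]
  · intro k _ hne; simp [epsD_apply, hne]
  · intro h; exact absurd (Finset.mem_Icc.mpr ⟨h1, h2⟩) h

lemma dotD_add_fst (n : ℕ) (u v w : ℕ → ℤ) :
    dotD n (u + v) w = dotD n u w + dotD n v w := by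
  unfold dotD
  rw [← Finset.sum_add_distrib]
  exact Finset.sum_congr rfl (fun k _ => by simp [add_mul])

lemma dotD_smul_fst (n : ℕ) (c : ℤ) (u w : ℕ → ℤ) :
    dotD n (c • u) w = c * dotD n u w := by
  unfold dotD
  rw [Finset.mul_sum]
  exact Finset.sum_congr rfl (fun k _ => by simp [mul_assoc])

lemma refD_add (n i : ℕ) (u v : ℕ → ℤ) :
    refD n i (u + v) = refD n i u + refD n i v := by
  unfold refD
  rw [dotD_add_fst, add_smul]
  abel

lemma refD_smul (n i : ℕ) (c : ℤ) (v : ℕ → ℤ) :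
    refD n i (c • v) = c • refD n i v := by
  unfold refD
  rw [dotD_smul_fst, smul_sub, smul_smul]

lemma alphaD_n {n : ℕ} : alphaD n n = epsD (n-1) + epsD n := by simp [alphaD]

lemma alphaD_lt {n i : ℕ} (h : i ≠ n) : alphaD n i = epsD i - epsD (i+1) := by
  simp [alphaD, h]

/-- `s_n (ε_{n-1}) = -ε_n` -/
lemma refD_n_pred {n : ℕ} (hn : 4 ≤ n) : refD n n (epsD (n-1)) = -epsD n := by
  unfold refD
  rw [dotD_eps_fst (by omega) (by omega), alphaD_n]
  funext k
  simp only [Pi.sub_apply, Pi.add_apply, Pi.smul_apply, smul_eq_mul, Pi.neg_apply, epsD_apply]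
  split_ifs <;> omega

/-- `s_n (ε_n) = -ε_{n-1}` -/
lemma refD_n_top {n : ℕ} (hn : 4 ≤ n) : refD n n (epsD n) = -epsD (n-1) := by
  unfold refD
  rw [dotD_eps_fst (by omega) (by omega), alphaD_n]
  funext k
  simp only [Pi.sub_apply, Pi.add_apply, Pi.smul_apply, smul_eq_mul, Pi.neg_apply, epsD_apply]
  split_ifs <;> omega

lemma refD_n_other {n m : ℕ} (hn : 4 ≤ n) (hm1 : 1 ≤ m) (hm2 : m ≤ n)
    (h1 : m ≠ n - 1) (h2 : m ≠ n) : refD n n (epsD m) = epsD m := by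
  unfold refD
  rw [dotD_eps_fst hm1 hm2, alphaD_n]
  funext k
  simp only [Pi.sub_apply, Pi.add_apply, Pi.smul_apply, smul_eq_mul, epsD_apply]
  split_ifs <;> omega

lemma refD_swap_lo {n i : ℕ} (hn : 4 ≤ n) (hi1 : 1 ≤ i) (hi2 : i ≤ n) (hin : i ≠ n) :
    refD n i (epsD i) = epsD (i+1) := by
  unfold refD
  rw [dotD_eps_fst hi1 hi2, alphaD_lt hin]
  funext k
  simp only [Pi.sub_apply, Pi.smul_apply, smul_eq_mul, epsD_apply]
  split_ifs <;> omega

lemma refD_swap_hi {n i : ℕ} (hn : 4 ≤ n) (hi1 : 1 ≤ i) (hi2 : i + 1 ≤ n) (hin : i ≠ n) :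
    refD n i (epsD (i+1)) = epsD i := by
  unfold refD
  rw [dotD_eps_fst (by omega) hi2, alphaD_lt hin]
  funext k
  simp only [Pi.sub_apply, Pi.smul_apply, smul_eq_mul, epsD_apply]
  split_ifs <;> omega

lemma refD_fix {n i m : ℕ} (hn : 4 ≤ n) (hm1 : 1 ≤ m) (hm2 : m ≤ n) (hin : i ≠ n)
    (h1 : m ≠ i) (h2 : m ≠ i + 1) : refD n i (epsD m) = epsD m := by
  unfold refD
  rw [dotD_eps_fst hm1 hm2, alphaD_lt hin]
  funext k
  simp only [Pi.sub_apply, Pi.smul_apply, smul_eq_mul, epsD_apply]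
  split_ifs <;> omega

/-- action of `s_i` on signed basis vectors, encoded on `(sign, index)`. -/
def stepD (n i : ℕ) (p : ℤ × ℕ) : ℤ × ℕ :=
  if i = n then
    (if p.2 = n - 1 then (-p.1, n) else if p.2 = n then (-p.1, n - 1) else p)
  else if p.2 = i then (p.1, i + 1) else if p.2 = i + 1 then (p.1, i) else p

def traceD (n : ℕ) (M : List ℕ) (p : ℤ × ℕ) : ℤ × ℕ := M.foldr (stepD n) p

@[simp] lemma traceD_nil (n : ℕ) (p : ℤ × ℕ) : traceD n [] p = p := rfl

@[simp] lemma traceD_cons (n i : ℕ) (M : List ℕ) (p : ℤ × ℕ) :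
    traceD n (i :: M) p = stepD n i (traceD n M p) := rfl

lemma coxD_nil (n : ℕ) (v : ℕ → ℤ) : coxD n [] v = v := rfl

lemma coxD_cons (n i : ℕ) (M : List ℕ) (v : ℕ → ℤ) :
    coxD n (i :: M) v = refD n i (coxD n M v) := rfl

lemma coxD_add (n : ℕ) (M : List ℕ) (u v : ℕ → ℤ) :
    coxD n M (u + v) = coxD n M u + coxD n M v := by
  induction M with
  | nil => rfl
  | cons i M ih => rw [coxD_cons, coxD_cons, coxD_cons, ih, refD_add]

lemma coxD_smul (n : ℕ) (M : List ℕ) (c : ℤ) (v : ℕ → ℤ) :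
    coxD n M (c • v) = c • coxD n M v := by
  induction M with
  | nil => rfl
  | cons i M ih => rw [coxD_cons, coxD_cons, ih, refD_smul]

lemma refD_eps {n : ℕ} (hn : 4 ≤ n) {i m : ℕ} (hi1 : 1 ≤ i) (hi2 : i ≤ n)
    (hm1 : 1 ≤ m) (hm2 : m ≤ n) :
    refD n i (epsD m) = (stepD n i (1, m)).1 • epsD (stepD n i (1, m)).2 := by
  unfold stepD
  by_cases hin : i = n
  · rw [hin]
    simp only [if_pos rfl]
    by_cases h1 : m = n - 1
    · rw [h1]
      simp only [if_pos rfl]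
      rw [refD_n_pred hn]
      funext k; simp only [Pi.neg_apply, Pi.smul_apply, smul_eq_mul, epsD_apply]
      split_ifs <;> norm_num
    · by_cases h2 : m = n
      · rw [h2]
        have : ¬ (n = n - 1) := by omega
        simp only [if_neg this, if_pos rfl]
        rw [refD_n_top hn]
        funext k; simp only [Pi.neg_apply, Pi.smul_apply, smul_eq_mul, epsD_apply]
        split_ifs <;> norm_num
      · simp only [if_neg h1, if_neg h2]
        rw [refD_n_other hn hm1 hm2 h1 h2]
        simp
  · simp only [if_neg hin]
    by_cases h1 : m = i
    · rw [h1]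
      have : ¬ (i = i + 1) := by omega
      simp only [if_pos rfl]
      rw [refD_swap_lo hn hi1 hi2 hin]
      simp
    · by_cases h2 : m = i + 1
      · rw [h2]
        have hne : ¬ (i + 1 = i) := by omega
        simp only [if_neg hne, if_pos rfl]
        have hi2' : i + 1 ≤ n := by omega
        rw [refD_swap_hi hn hi1 hi2' hin]
        simp
      · simp only [if_neg h1, if_neg h2]
        rw [refD_fix hn hm1 hm2 hin h1 h2]
        simp

lemma stepD_sign (n i : ℕ) (s : ℤ) (m : ℕ) :
    stepD n i (s, m) = (s * (stepD n i (1, m)).1, (stepD n i (1, m)).2) := by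
  unfold stepD
  split_ifs <;> simp <;> ring

lemma stepD_range {n i : ℕ} (hn : 4 ≤ n) (hi1 : 1 ≤ i) (hi2 : i ≤ n)
    {m : ℕ} (hm1 : 1 ≤ m) (hm2 : m ≤ n) (s : ℤ) :
    1 ≤ (stepD n i (s, m)).2 ∧ (stepD n i (s, m)).2 ≤ n := by
  unfold stepD
  split_ifs <;> simp <;> omega

lemma traceD_range {n : ℕ} (hn : 4 ≤ n) (M : List ℕ)
    (hM : ∀ j ∈ M, 1 ≤ j ∧ j ≤ n) (s : ℤ) {m : ℕ} (hm1 : 1 ≤ m) (hm2 : m ≤ n) :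
    1 ≤ (traceD n M (s, m)).2 ∧ (traceD n M (s, m)).2 ≤ n := by
  induction M with
  | nil => exact ⟨hm1, hm2⟩
  | cons i M ih =>
    have h := ih (fun j hj => hM j (List.mem_cons_of_mem _ hj))
    have hi := hM i (List.mem_cons_self)
    rw [traceD_cons]
    rcases htr : traceD n M (s, m) with ⟨t, m'⟩
    rw [htr] at h
    exact stepD_range hn hi.1 hi.2 h.1 h.2 t

lemma coxD_trace {n : ℕ} (hn : 4 ≤ n) (M : List ℕ)
    (hM : ∀ j ∈ M, 1 ≤ j ∧ j ≤ n) (s : ℤ) {m : ℕ} (hm1 : 1 ≤ m) (hm2 : m ≤ n) :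
    coxD n M (s • epsD m) = (traceD n M (s, m)).1 • epsD (traceD n M (s, m)).2 := by
  induction M with
  | nil => rfl
  | cons i M ih =>
    have hM' : ∀ j ∈ M, 1 ≤ j ∧ j ≤ n := fun j hj => hM j (List.mem_cons_of_mem _ hj)
    have hi := hM i (List.mem_cons_self)
    have hr := traceD_range hn M hM' s hm1 hm2
    rw [coxD_cons, ih hM', traceD_cons]
    rcases htr : traceD n M (s, m) with ⟨t, m'⟩
    rw [htr] at hr
    rw [refD_smul, refD_eps hn hi.1 hi.2 hr.1 hr.2, smul_smul, stepD_sign n i t m']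

lemma stepD_sign_unit (n i : ℕ) (m : ℕ) :
    (stepD n i (1, m)).1 = 1 ∨ (stepD n i (1, m)).1 = -1 := by
  unfold stepD
  split_ifs <;> simp

lemma traceD_sign_unit (n : ℕ) (M : List ℕ) (m : ℕ) :
    (traceD n M ((1:ℤ), m)).1 = 1 ∨ (traceD n M ((1:ℤ), m)).1 = -1 := by
  induction M with
  | nil => left; rfl
  | cons i M ih =>
    rw [traceD_cons]
    rcases htr : traceD n M ((1:ℤ), m) with ⟨t, m'⟩
    rw [htr] at ih
    have h2 := stepD_sign_unit n i m'
    rw [stepD_sign n i t m']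
    simp only [Prod.fst] at ih h2 ⊢
    rcases ih with h | h <;> rcases h2 with h' | h' <;> rw [h, h'] <;> norm_num

end Stmt11
namespace Stmt11

/-! ### list order machinery -/

def befD (M : List ℕ) (x y : ℕ) : Prop :=
  x ∈ M ∧ y ∈ M ∧ M.idxOf x < M.idxOf y

lemma befD_ne {M : List ℕ} {x y : ℕ} (h : befD M x y) : x ≠ y := by
  rintro rfl; exact lt_irrefl _ h.2.2

lemma befD_not_head {i : ℕ} {M : List ℕ} {x : ℕ} : ¬ befD (i :: M) x i := by
  rintro ⟨_, _, h⟩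
  rw [List.idxOf_cons_self] at h
  omega

lemma befD_tail {i : ℕ} {M : List ℕ} {x y : ℕ} (h : befD (i :: M) x y) (hx : x ≠ i) :
    befD M x y := by
  obtain ⟨h1, h2, h3⟩ := h
  have hy : y ≠ i := by
    rintro rfl
    exact befD_not_head ⟨h1, h2, h3⟩
  have h1' : x ∈ M := by rcases List.mem_cons.mp h1 with h | h; exact absurd h hx; exact h
  have h2' : y ∈ M := by rcases List.mem_cons.mp h2 with h | h; exact absurd h hy; exact h
  refine ⟨h1', h2', ?_⟩
  rw [List.idxOf_cons_ne _ (Ne.symm hx), List.idxOf_cons_ne _ (Ne.symm hy)] at h3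
  omega

lemma befD_head {i : ℕ} {M : List ℕ} {y : ℕ} (hy : y ∈ M) (hne : y ≠ i) :
    befD (i :: M) i y := by
  refine ⟨List.mem_cons_self, List.mem_cons_of_mem _ hy, ?_⟩
  rw [List.idxOf_cons_self, List.idxOf_cons_ne _ (Ne.symm hne)]
  omega

lemma befD_cons {i : ℕ} {M : List ℕ} {x y : ℕ} (hx : x ≠ i) (hy : y ≠ i)
    (h : befD M x y) : befD (i :: M) x y := by
  refine ⟨List.mem_cons_of_mem _ h.1, List.mem_cons_of_mem _ h.2.1, ?_⟩
  rw [List.idxOf_cons_ne _ (Ne.symm hx), List.idxOf_cons_ne _ (Ne.symm hy)]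
  exact Nat.succ_lt_succ h.2.2

lemma befD_total {M : List ℕ} {x y : ℕ} (hx : x ∈ M) (hy : y ∈ M) (hne : x ≠ y) :
    befD M x y ∨ befD M y x := by
  induction M with
  | nil => exact absurd hx List.not_mem_nil
  | cons i M ih =>
    by_cases e1 : x = i
    · subst e1
      have hy' : y ∈ M := by
        rcases List.mem_cons.mp hy with h | h
        · exact absurd h.symm hne
        · exact h
      exact Or.inl (befD_head hy' (Ne.symm hne))
    · by_cases e2 : y = i
      · subst e2
        have hx' : x ∈ M := by
          rcases List.mem_cons.mp hx with h | h
          · exact absurd h e1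
          · exact h
        exact Or.inr (befD_head hx' hne)
      · have hx' : x ∈ M := by
          rcases List.mem_cons.mp hx with h | h
          · exact absurd h e1
          · exact h
        have hy' : y ∈ M := by
          rcases List.mem_cons.mp hy with h | h
          · exact absurd h e2
          · exact h
        rcases ih hx' hy' with h | h
        · exact Or.inl (befD_cons e1 e2 h)
        · exact Or.inr (befD_cons e2 e1 h)

lemma befD_trans {M : List ℕ} {x y z : ℕ} (h1 : befD M x y) (h2 : befD M y z) :
    befD M x z := ⟨h1.1, h2.2.1, lt_trans h1.2.2 h2.2.2⟩

/-- restriction of a persistent hypothesis to the tail. -/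
lemma befD_hyp_tail {i : ℕ} {M : List ℕ} {x y : ℕ} (hnd : (i :: M).Nodup)
    (h : x ∈ i :: M → befD (i :: M) x y) : x ∈ M → befD M x y := by
  intro hx
  have hiM : i ∉ M := (List.nodup_cons.mp hnd).1
  exact befD_tail (h (List.mem_cons_of_mem _ hx)) (by rintro rfl; exact hiM hx)

/-! ### the descent function -/

def ddD (M : List ℕ) (m : ℕ) : ℕ := M.foldr (fun i c => if i + 1 = c then i else c) m

@[simp] lemma ddD_nil (m : ℕ) : ddD [] m = m := rfl

@[simp] lemma ddD_cons (i : ℕ) (M : List ℕ) (m : ℕ) :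
    ddD (i :: M) m = if i + 1 = ddD M m then i else ddD M m := rfl

lemma ddD_le (M : List ℕ) (m : ℕ) : ddD M m ≤ m := by
  induction M with
  | nil => exact le_refl _
  | cons i M ih =>
    rw [ddD_cons]
    split_ifs with h <;> omega

lemma ddD_mem (M : List ℕ) (m : ℕ) : ddD M m = m ∨ ddD M m ∈ M := by
  induction M with
  | nil => exact Or.inl rfl
  | cons i M ih =>
    rw [ddD_cons]
    split_ifs with h
    · exact Or.inr (List.mem_cons_self)
    · rcases ih with h' | h'
      · exact Or.inl h'
      · exact Or.inr (List.mem_cons_of_mem _ h')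

/-! ### takeWhile helpers -/

def twD (t : ℕ) (M : List ℕ) : List ℕ := M.takeWhile (fun x => x != t)

lemma twD_cons_ne {t i : ℕ} (M : List ℕ) (h : i ≠ t) : twD t (i :: M) = i :: twD t M := by
  simp [twD, List.takeWhile_cons, h]

lemma twD_cons_self {t : ℕ} (M : List ℕ) : twD t (t :: M) = [] := by
  simp [twD, List.takeWhile_cons]

lemma twD_subset {t x : ℕ} {M : List ℕ} (h : x ∈ twD t M) : x ∈ M :=
  (List.takeWhile_sublist _).mem h

lemma twD_ne {t x : ℕ} {M : List ℕ} (h : x ∈ twD t M) : x ≠ t := by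
  have := List.mem_takeWhile_imp h
  simpa using this

/-! ### step evaluation -/

lemma stepD_n_top {n : ℕ} (hn : 4 ≤ n) (s : ℤ) : stepD n n (s, n) = (-s, n-1) := by
  unfold stepD
  have h1 : ¬ ((s, n).2 = n - 1) := by simp; omega
  rw [if_pos rfl, if_neg h1, if_pos rfl]

lemma stepD_n_pred {n : ℕ} (hn : 4 ≤ n) (s : ℤ) : stepD n n (s, n-1) = (-s, n) := by
  unfold stepD
  rw [if_pos rfl, if_pos rfl]

lemma stepD_n_other {n m : ℕ} (hn : 4 ≤ n) (h1 : m ≠ n - 1) (h2 : m ≠ n) (s : ℤ) :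
    stepD n n (s, m) = (s, m) := by
  unfold stepD
  have h1' : ¬ ((s, m).2 = n - 1) := h1
  have h2' : ¬ ((s, m).2 = n) := h2
  rw [if_pos rfl, if_neg h1', if_neg h2']

lemma stepD_swap_lo {n i : ℕ} (hin : i ≠ n) (s : ℤ) : stepD n i (s, i) = (s, i+1) := by
  unfold stepD
  rw [if_neg hin, if_pos rfl]

lemma stepD_swap_hi {n i : ℕ} (hin : i ≠ n) (s : ℤ) : stepD n i (s, i+1) = (s, i) := by
  unfold stepD
  have h1 : ¬ ((s, i+1).2 = i) := by simp
  rw [if_neg hin, if_neg h1, if_pos rfl]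

lemma stepD_fix {n i m : ℕ} (hin : i ≠ n) (h1 : m ≠ i) (h2 : m ≠ i + 1) (s : ℤ) :
    stepD n i (s, m) = (s, m) := by
  unfold stepD
  have h1' : ¬ ((s, m).2 = i) := h1
  have h2' : ¬ ((s, m).2 = i+1) := h2
  rw [if_neg hin, if_neg h1', if_neg h2']

end Stmt11
namespace Stmt11

lemma not_mem_cons {x i : ℕ} {M : List ℕ} (h1 : x ≠ i) (h2 : x ∉ M) : x ∉ i :: M := by
  rw [List.mem_cons]; push_neg; exact ⟨h1, h2⟩

lemma mem_of_cons_ne {x i : ℕ} {M : List ℕ} (h : x ∈ i :: M) (hne : x ≠ i) : x ∈ M := by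
  rcases List.mem_cons.mp h with h' | h'
  · exact absurd h' hne
  · exact h'

/-- `s_{n-1}(ε_n) = ε_{n-1}` in step form. -/
lemma stepD_pred_swap {n : ℕ} (hn : 4 ≤ n) (s : ℤ) : stepD n (n-1) (s, n) = (s, n-1) := by
  unfold stepD
  have h0 : ¬(n - 1 = n) := by omega
  have h1 : ¬((s, n).2 = n-1) := by simp; omega
  have h2 : (s, n).2 = n-1+1 := by simp; omega
  rw [if_neg h0, if_neg h1, if_pos h2]

/-- `s_{n-1}(ε_{n-1}) = ε_n` in step form. -/
lemma stepD_pred_up {n : ℕ} (hn : 4 ≤ n) (s : ℤ) : stepD n (n-1) (s, n-1) = (s, n) := by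
  unfold stepD
  have h0 : ¬(n - 1 = n) := by omega
  rw [if_neg h0, if_pos rfl]
  have : n - 1 + 1 = n := by omega
  rw [this]

/-- `s_{n-2}(ε_{n-1}) = ε_{n-2}` in step form. -/
lemma stepD_n2_down {n : ℕ} (hn : 4 ≤ n) (s : ℤ) : stepD n (n-2) (s, n-1) = (s, n-2) := by
  unfold stepD
  have h0 : ¬(n - 2 = n) := by omega
  have h1 : ¬((s, n-1).2 = n-2) := by simp; omega
  have h2 : (s, n-1).2 = n-2+1 := by simp; omega
  rw [if_neg h0, if_neg h1, if_pos h2]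

/-- `τ(ε_n) = -ε_n` when, in the word, `n-1` comes before `n` and `n-2` is not
in between. -/
lemma masterA {n : ℕ} (hn : 4 ≤ n) (M : List ℕ) (hnd : M.Nodup)
    (h1 : n-1 ∈ M → befD M (n-1) n)
    (h2 : (∀ _ : n ∈ M, befD M n (n-2)) ∨ (∀ _ : n-2 ∈ M, befD M (n-2) (n-1))) :
    traceD n M ((1:ℤ), n) =
      (if n-1 ∈ M then ((-1:ℤ), n) else if n ∈ M then ((-1:ℤ), n-1) else ((1:ℤ), n)) := by
  induction M with
  | nil => simp
  | cons i M ih =>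
    have hiM : i ∉ M := (List.nodup_cons.mp hnd).1
    have hndM : M.Nodup := (List.nodup_cons.mp hnd).2
    have h1' : n-1 ∈ M → befD M (n-1) n := befD_hyp_tail hnd h1
    have h2' : (∀ _ : n ∈ M, befD M n (n-2)) ∨ (∀ _ : n-2 ∈ M, befD M (n-2) (n-1)) := by
      rcases h2 with h | h
      · exact Or.inl (befD_hyp_tail hnd h)
      · exact Or.inr (befD_hyp_tail hnd h)
    have IH := ih hndM h1' h2'
    rw [traceD_cons, IH]
    by_cases e1 : i = n-1
    · subst e1
      have hbn : n ∈ M :=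
        mem_of_cons_ne (h1 (List.mem_cons_self)).2.1 (by omega)
      rw [if_neg hiM, if_pos hbn, stepD_pred_up hn,
        if_pos (List.mem_cons_self)]
    · by_cases e2 : i = n
      · rw [e2] at h1 h2 hiM ⊢
        have hm1 : n - 1 ∉ M := fun hx =>
          befD_not_head (h1 (List.mem_cons_of_mem _ hx))
        rw [if_neg hm1, if_neg hiM, stepD_n_top hn,
          if_neg (not_mem_cons (by omega) hm1),
          if_pos (List.mem_cons_self)]
      · by_cases e3 : i = n-2
        · subst e3
          rcases h2 with h | h
          · have hnM : n ∉ M := fun hx =>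
              befD_not_head (h (List.mem_cons_of_mem _ hx))
            have hm1 : n - 1 ∉ M := fun hx => hnM (h1' hx).2.1
            rw [if_neg hm1, if_neg hnM,
              stepD_fix (show n-2 ≠ n by omega) (by omega) (by omega),
              if_neg (not_mem_cons (by omega) hm1),
              if_neg (not_mem_cons (by omega) hnM)]
          · have hm1 : n - 1 ∈ M :=
              mem_of_cons_ne (h (List.mem_cons_self)).2.1 (by omega)
            rw [if_pos hm1,
              stepD_fix (show n-2 ≠ n by omega) (by omega) (by omega),
              if_pos (List.mem_cons_of_mem _ hm1)]
        · by_cases m1 : n-1 ∈ M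
          · rw [if_pos m1, stepD_fix e2 (fun h => e2 h.symm) (by omega),
              if_pos (List.mem_cons_of_mem _ m1)]
          · by_cases m2 : n ∈ M
            · rw [if_neg m1, if_pos m2,
                stepD_fix e2 (by omega) (by omega),
                if_neg (not_mem_cons (by omega) m1),
                if_pos (List.mem_cons_of_mem _ m2)]
            · rw [if_neg m1, if_neg m2,
                stepD_fix e2 (fun h => e2 h.symm) (by omega),
                if_neg (not_mem_cons (by omega) m1),
                if_neg (not_mem_cons (fun h => e2 h.symm) m2)]

/-- `τ(ε_n) = -ε_n` when, in the word, `n` comes before `n-1` and `n-2` is not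
in between. -/
lemma masterB {n : ℕ} (hn : 4 ≤ n) (M : List ℕ) (hnd : M.Nodup)
    (h1 : n ∈ M → befD M n (n-1))
    (h2 : (∀ _ : n-1 ∈ M, befD M (n-1) (n-2)) ∨ (∀ _ : n-2 ∈ M, befD M (n-2) n)) :
    traceD n M ((1:ℤ), n) =
      (if n ∈ M then ((-1:ℤ), n) else if n-1 ∈ M then ((1:ℤ), n-1) else ((1:ℤ), n)) := by
  induction M with
  | nil => simp
  | cons i M ih =>
    have hiM : i ∉ M := (List.nodup_cons.mp hnd).1
    have hndM : M.Nodup := (List.nodup_cons.mp hnd).2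
    have h1' : n ∈ M → befD M n (n-1) := befD_hyp_tail hnd h1
    have h2' : (∀ _ : n-1 ∈ M, befD M (n-1) (n-2)) ∨ (∀ _ : n-2 ∈ M, befD M (n-2) n) := by
      rcases h2 with h | h
      · exact Or.inl (befD_hyp_tail hnd h)
      · exact Or.inr (befD_hyp_tail hnd h)
    have IH := ih hndM h1' h2'
    rw [traceD_cons, IH]
    by_cases e2 : i = n
    · rw [e2] at h1 hiM ⊢
      have hm1 : n - 1 ∈ M :=
        mem_of_cons_ne (h1 (List.mem_cons_self)).2.1 (by omega)
      rw [if_neg hiM, if_pos hm1, stepD_n_pred hn, if_pos (List.mem_cons_self)]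
    · by_cases e1 : i = n-1
      · subst e1
        have hnM : n ∉ M := fun hx => hiM (h1' hx).2.1
        rw [if_neg hnM, if_neg hiM, stepD_pred_swap hn,
          if_neg (not_mem_cons (by omega) hnM),
          if_pos (List.mem_cons_self)]
      · by_cases e3 : i = n-2
        · subst e3
          rcases h2 with h | h
          · have hm1 : n - 1 ∉ M := fun hx =>
              befD_not_head (h (List.mem_cons_of_mem _ hx))
            have hnM : n ∉ M := fun hx => hm1 (h1' hx).2.1
            rw [if_neg hnM, if_neg hm1,
              stepD_fix (show n-2 ≠ n by omega) (by omega) (by omega),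
              if_neg (not_mem_cons (by omega) hnM),
              if_neg (not_mem_cons (by omega) hm1)]
          · have hnM : n ∈ M :=
              mem_of_cons_ne (h (List.mem_cons_self)).2.1 (by omega)
            rw [if_pos hnM,
              stepD_fix (show n-2 ≠ n by omega) (by omega) (by omega),
              if_pos (List.mem_cons_of_mem _ hnM)]
        · by_cases m2 : n ∈ M
          · rw [if_pos m2, stepD_fix e2 (fun h => e2 h.symm) (by omega),
              if_pos (List.mem_cons_of_mem _ m2)]
          · by_cases m1 : n-1 ∈ M
            · rw [if_neg m2, if_pos m1,
                stepD_fix e2 (by omega) (by omega),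
                if_neg (not_mem_cons (fun h => e2 h.symm) m2),
                if_pos (List.mem_cons_of_mem _ m1)]
            · rw [if_neg m2, if_neg m1,
                stepD_fix e2 (fun h => e2 h.symm) (by omega),
                if_neg (not_mem_cons (fun h => e2 h.symm) m2),
                if_neg (not_mem_cons (by omega) m1)]

end Stmt11
namespace Stmt11

/-- `τ(ε_n)` when `idx(n-1) < idx(n-2) < idx(n)`: it ends at `-ε_{dd}`. -/
lemma masterC {n : ℕ} (hn : 4 ≤ n) (M : List ℕ) (hnd : M.Nodup)
    (h1 : n-1 ∈ M → befD M (n-1) (n-2))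
    (h2 : n-2 ∈ M → befD M (n-2) n) :
    traceD n M ((1:ℤ), n) =
      (if n ∈ M then
        (if n-2 ∈ M then ((-1:ℤ), ddD (twD (n-2) M) (n-2)) else ((-1:ℤ), n-1))
       else ((1:ℤ), n)) := by
  induction M with
  | nil => simp
  | cons i M ih =>
    have hiM : i ∉ M := (List.nodup_cons.mp hnd).1
    have hndM : M.Nodup := (List.nodup_cons.mp hnd).2
    have h1' : n-1 ∈ M → befD M (n-1) (n-2) := befD_hyp_tail hnd h1
    have h2' : n-2 ∈ M → befD M (n-2) n := befD_hyp_tail hnd h2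
    have IH := ih hndM h1' h2'
    rw [traceD_cons, IH]
    by_cases e2 : i = n
    · rw [e2] at h1 h2 hiM ⊢
      have hm2 : n - 2 ∉ M := fun hx =>
        befD_not_head (h2 (List.mem_cons_of_mem _ hx))
      rw [if_neg hiM, stepD_n_top hn, if_pos (List.mem_cons_self),
        if_neg (not_mem_cons (by omega) hm2)]
    · by_cases e3 : i = n-2
      · subst e3
        have hnM : n ∈ M :=
          mem_of_cons_ne (h2 (List.mem_cons_self)).2.1 (by omega)
        rw [if_pos hnM, if_neg hiM, stepD_n2_down hn,
          if_pos (List.mem_cons_of_mem _ hnM), if_pos (List.mem_cons_self),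
          twD_cons_self, ddD_nil]
      · by_cases e1 : i = n-1
        · subst e1
          have hm2 : n - 2 ∈ M :=
            mem_of_cons_ne (h1 (List.mem_cons_self)).2.1 (by omega)
          have hnM : n ∈ M := (h2' hm2).2.1
          have hc := ddD_le (twD (n-2) M) (n-2)
          rw [if_pos hnM, if_pos hm2,
            stepD_fix (show n-1 ≠ n by omega) (by omega) (by omega),
            if_pos (List.mem_cons_of_mem _ hnM), if_pos (List.mem_cons_of_mem _ hm2),
            twD_cons_ne _ (by omega : n-1 ≠ n-2), ddD_cons, if_neg (by omega)]
        · by_cases m2 : n ∈ M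
          · by_cases m3 : n-2 ∈ M
            · have hc := ddD_le (twD (n-2) M) (n-2)
              have hic : i ≠ ddD (twD (n-2) M) (n-2) := by
                rcases ddD_mem (twD (n-2) M) (n-2) with h | h
                · omega
                · intro he; rw [← he] at h; exact hiM (twD_subset h)
              rw [if_pos m2, if_pos m3, if_pos (List.mem_cons_of_mem _ m2),
                if_pos (List.mem_cons_of_mem _ m3), twD_cons_ne _ e3, ddD_cons]
              by_cases hup : i + 1 = ddD (twD (n-2) M) (n-2)
              · rw [if_pos hup, ← hup, stepD_swap_hi e2]
              · rw [if_neg hup,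
                  stepD_fix e2 (fun h => hic h.symm) (fun h => hup h.symm)]
            · rw [if_pos m2, if_neg m3,
                stepD_fix e2 (by omega) (by omega),
                if_pos (List.mem_cons_of_mem _ m2),
                if_neg (not_mem_cons (fun h => e3 h.symm) m3)]
          · rw [if_neg m2, stepD_fix e2 (fun h => e2 h.symm) (by omega),
              if_neg (not_mem_cons (fun h => e2 h.symm) m2)]

/-- `τ(ε_{n-1}) = -ε_{n-1}` when `idx(n-1) < idx(n-2) < idx(n)`. -/
lemma masterD {n : ℕ} (hn : 4 ≤ n) (M : List ℕ) (hnd : M.Nodup)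
    (h1 : n-1 ∈ M → befD M (n-1) (n-2))
    (h2 : n-2 ∈ M → befD M (n-2) n) :
    traceD n M ((1:ℤ), n-1) =
      (if n-1 ∈ M then ((-1:ℤ), n-1) else if n ∈ M then ((-1:ℤ), n) else ((1:ℤ), n-1)) := by
  induction M with
  | nil => simp
  | cons i M ih =>
    have hiM : i ∉ M := (List.nodup_cons.mp hnd).1
    have hndM : M.Nodup := (List.nodup_cons.mp hnd).2
    have h1' : n-1 ∈ M → befD M (n-1) (n-2) := befD_hyp_tail hnd h1
    have h2' : n-2 ∈ M → befD M (n-2) n := befD_hyp_tail hnd h2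
    have IH := ih hndM h1' h2'
    rw [traceD_cons, IH]
    by_cases e2 : i = n
    · rw [e2] at h1 h2 hiM ⊢
      have hm2 : n - 2 ∉ M := fun hx =>
        befD_not_head (h2 (List.mem_cons_of_mem _ hx))
      have hm1 : n - 1 ∉ M := fun hx => hm2 (h1' hx).2.1
      rw [if_neg hm1, if_neg hiM, stepD_n_pred hn,
        if_neg (not_mem_cons (by omega) hm1), if_pos (List.mem_cons_self)]
    · by_cases e3 : i = n-2
      · subst e3
        have hnM : n ∈ M :=
          mem_of_cons_ne (h2 (List.mem_cons_self)).2.1 (by omega)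
        have hm1 : n - 1 ∉ M := fun hx =>
          befD_not_head (h1 (List.mem_cons_of_mem _ hx))
        rw [if_neg hm1, if_pos hnM,
          stepD_fix (show n-2 ≠ n by omega) (by omega) (by omega),
          if_neg (not_mem_cons (by omega) hm1), if_pos (List.mem_cons_of_mem _ hnM)]
      · by_cases e1 : i = n-1
        · subst e1
          have hm2 : n - 2 ∈ M :=
            mem_of_cons_ne (h1 (List.mem_cons_self)).2.1 (by omega)
          have hnM : n ∈ M := (h2' hm2).2.1
          rw [if_neg hiM, if_pos hnM, stepD_pred_swap hn,
            if_pos (List.mem_cons_self)]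
        · by_cases m1 : n-1 ∈ M
          · rw [if_pos m1, stepD_fix e2 (by omega) (by omega),
              if_pos (List.mem_cons_of_mem _ m1)]
          · by_cases m2 : n ∈ M
            · rw [if_neg m1, if_pos m2, stepD_fix e2 (by omega) (by omega),
                if_neg (not_mem_cons (by omega) m1),
                if_pos (List.mem_cons_of_mem _ m2)]
            · rw [if_neg m1, if_neg m2, stepD_fix e2 (by omega) (by omega),
                if_neg (not_mem_cons (by omega) m1),
                if_neg (not_mem_cons (fun h => e2 h.symm) m2)]

/-- `τ(ε_n)` when `idx(n) < idx(n-2) < idx(n-1)`: it ends at `+ε_{dd}`. -/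
lemma masterE {n : ℕ} (hn : 4 ≤ n) (M : List ℕ) (hnd : M.Nodup)
    (g1 : n ∈ M → befD M n (n-2))
    (g2 : n-2 ∈ M → befD M (n-2) (n-1)) :
    traceD n M ((1:ℤ), n) =
      (if n-1 ∈ M then
        (if n-2 ∈ M then ((1:ℤ), ddD (twD (n-2) M) (n-2)) else ((1:ℤ), n-1))
       else ((1:ℤ), n)) := by
  induction M with
  | nil => simp
  | cons i M ih =>
    have hiM : i ∉ M := (List.nodup_cons.mp hnd).1
    have hndM : M.Nodup := (List.nodup_cons.mp hnd).2
    have g1' : n ∈ M → befD M n (n-2) := befD_hyp_tail hnd g1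
    have g2' : n-2 ∈ M → befD M (n-2) (n-1) := befD_hyp_tail hnd g2
    have IH := ih hndM g1' g2'
    rw [traceD_cons, IH]
    by_cases e1 : i = n-1
    · subst e1
      have hm2 : n - 2 ∉ M := fun hx =>
        befD_not_head (g2 (List.mem_cons_of_mem _ hx))
      have hnM : n ∉ M := fun hx => hm2 (g1' hx).2.1
      rw [if_neg hiM, stepD_pred_swap hn, if_pos (List.mem_cons_self),
        if_neg (not_mem_cons (by omega) hm2)]
    · by_cases e3 : i = n-2
      · subst e3
        have hm1 : n - 1 ∈ M :=
          mem_of_cons_ne (g2 (List.mem_cons_self)).2.1 (by omega)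
        have hnM : n ∉ M := fun hx =>
          befD_not_head (g1 (List.mem_cons_of_mem _ hx))
        rw [if_pos hm1, if_neg hiM, stepD_n2_down hn,
          if_pos (List.mem_cons_of_mem _ hm1), if_pos (List.mem_cons_self),
          twD_cons_self, ddD_nil]
      · by_cases e2 : i = n
        · rw [e2] at g1 g2 hiM ⊢
          have hm2 : n - 2 ∈ M :=
            mem_of_cons_ne (g1 (List.mem_cons_self)).2.1 (by omega)
          have hm1 : n - 1 ∈ M := (g2' hm2).2.1
          have hc := ddD_le (twD (n-2) M) (n-2)
          rw [if_pos hm1, if_pos hm2, stepD_n_other hn (by omega) (by omega),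
            if_pos (List.mem_cons_of_mem _ hm1), if_pos (List.mem_cons_of_mem _ hm2),
            twD_cons_ne _ (by omega : n ≠ n-2), ddD_cons, if_neg (by omega)]
        · by_cases m1 : n-1 ∈ M
          · by_cases m3 : n-2 ∈ M
            · have hc := ddD_le (twD (n-2) M) (n-2)
              have hic : i ≠ ddD (twD (n-2) M) (n-2) := by
                rcases ddD_mem (twD (n-2) M) (n-2) with h | h
                · omega
                · intro he; rw [← he] at h; exact hiM (twD_subset h)
              rw [if_pos m1, if_pos m3, if_pos (List.mem_cons_of_mem _ m1),
                if_pos (List.mem_cons_of_mem _ m3), twD_cons_ne _ e3, ddD_cons]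
              by_cases hup : i + 1 = ddD (twD (n-2) M) (n-2)
              · rw [if_pos hup, ← hup, stepD_swap_hi e2]
              · rw [if_neg hup,
                  stepD_fix e2 (fun h => hic h.symm) (fun h => hup h.symm)]
            · rw [if_pos m1, if_neg m3,
                stepD_fix e2 (by omega) (by omega),
                if_pos (List.mem_cons_of_mem _ m1),
                if_neg (not_mem_cons (fun h => e3 h.symm) m3)]
          · rw [if_neg m1, stepD_fix e2 (fun h => e2 h.symm) (by omega),
              if_neg (not_mem_cons (by omega) m1)]

/-- `τ(ε_{n-1}) = -ε_{n-1}` when `idx(n) < idx(n-2) < idx(n-1)`. -/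
lemma masterF {n : ℕ} (hn : 4 ≤ n) (M : List ℕ) (hnd : M.Nodup)
    (g1 : n ∈ M → befD M n (n-2))
    (g2 : n-2 ∈ M → befD M (n-2) (n-1)) :
    traceD n M ((1:ℤ), n-1) =
      (if n ∈ M then ((-1:ℤ), n-1) else if n-1 ∈ M then ((1:ℤ), n) else ((1:ℤ), n-1)) := by
  induction M with
  | nil => simp
  | cons i M ih =>
    have hiM : i ∉ M := (List.nodup_cons.mp hnd).1
    have hndM : M.Nodup := (List.nodup_cons.mp hnd).2
    have g1' : n ∈ M → befD M n (n-2) := befD_hyp_tail hnd g1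
    have g2' : n-2 ∈ M → befD M (n-2) (n-1) := befD_hyp_tail hnd g2
    have IH := ih hndM g1' g2'
    rw [traceD_cons, IH]
    by_cases e1 : i = n-1
    · subst e1
      have hnM : n ∉ M := fun hx => hiM (g2' (g1' hx).2.1).2.1
      rw [if_neg hnM, if_neg hiM, stepD_pred_up hn,
        if_neg (not_mem_cons (by omega) hnM), if_pos (List.mem_cons_self)]
    · by_cases e3 : i = n-2
      · subst e3
        have hnM : n ∉ M := fun hx =>
          befD_not_head (g1 (List.mem_cons_of_mem _ hx))
        have hm1 : n - 1 ∈ M :=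
          mem_of_cons_ne (g2 (List.mem_cons_self)).2.1 (by omega)
        rw [if_neg hnM, if_pos hm1,
          stepD_fix (show n-2 ≠ n by omega) (by omega) (by omega),
          if_neg (not_mem_cons (by omega) hnM), if_pos (List.mem_cons_of_mem _ hm1)]
      · by_cases e2 : i = n
        · rw [e2] at g1 g2 hiM ⊢
          have hm2 : n - 2 ∈ M :=
            mem_of_cons_ne (g1 (List.mem_cons_self)).2.1 (by omega)
          have hm1 : n - 1 ∈ M := (g2' hm2).2.1
          rw [if_neg hiM, if_pos hm1, stepD_n_top hn, if_pos (List.mem_cons_self)]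
        · by_cases m2 : n ∈ M
          · rw [if_pos m2, stepD_fix e2 (by omega) (by omega),
              if_pos (List.mem_cons_of_mem _ m2)]
          · by_cases m1 : n-1 ∈ M
            · rw [if_neg m2, if_pos m1, stepD_fix e2 (by omega) (by omega),
                if_neg (not_mem_cons (fun h => e2 h.symm) m2),
                if_pos (List.mem_cons_of_mem _ m1)]
            · rw [if_neg m2, if_neg m1, stepD_fix e2 (by omega) (by omega),
                if_neg (not_mem_cons (fun h => e2 h.symm) m2),
                if_neg (not_mem_cons (by omega) m1)]

end Stmt11
namespace Stmt11

lemma indexOf_append_left {x : ℕ} {P Q : List ℕ} (h : x ∈ P) :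
    List.idxOf x (P ++ Q) = List.idxOf x P := by
  induction P with
  | nil => exact absurd h List.not_mem_nil
  | cons p P ih =>
    by_cases hx : x = p
    · subst hx
      rw [List.cons_append, List.idxOf_cons_self, List.idxOf_cons_self]
    · have h' : x ∈ P := mem_of_cons_ne h hx
      rw [List.cons_append, List.idxOf_cons_ne _ (Ne.symm hx),
        List.idxOf_cons_ne _ (Ne.symm hx), ih h']

lemma indexOf_append_right {x : ℕ} {P Q : List ℕ} (h : x ∉ P) :
    List.idxOf x (P ++ Q) = P.length + List.idxOf x Q := by
  induction P with
  | nil => simp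
  | cons p P ih =>
    have hx : x ≠ p := fun he => h (he ▸ List.mem_cons_self)
    have h' : x ∉ P := fun hm => h (List.mem_cons_of_mem _ hm)
    rw [List.cons_append, List.idxOf_cons_ne _ (Ne.symm hx), ih h',
      List.length_cons]
    omega

lemma mem_twD_of_lt {x t : ℕ} {M : List ℕ} (hx : x ∈ M)
    (hlt : List.idxOf x M < List.idxOf t M) : x ∈ twD t M := by
  induction M with
  | nil => exact absurd hx List.not_mem_nil
  | cons h M ih =>
    by_cases hht : h = t
    · subst hht
      rw [List.idxOf_cons_self] at hlt
      omega
    · rw [twD_cons_ne _ hht]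
      by_cases hxh : x = h
      · subst hxh; exact List.mem_cons_self
      · have hx' : x ∈ M := mem_of_cons_ne hx hxh
        rw [List.idxOf_cons_ne _ (Ne.symm hxh),
          List.idxOf_cons_ne _ hht] at hlt
        exact List.mem_cons_of_mem _ (ih hx' (by omega))

lemma twD_indexOf {x t : ℕ} {M : List ℕ} (hx : x ∈ twD t M) :
    List.idxOf x (twD t M) = List.idxOf x M := by
  have h := indexOf_append_left (Q := M.dropWhile (fun y => y != t)) hx
  rw [show twD t M ++ M.dropWhile (fun y => y != t) = M from
    List.takeWhile_append_dropWhile] at h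
  omega

lemma twD_lt {x t : ℕ} {M : List ℕ} (hx : x ∈ twD t M) (ht : t ∈ M) :
    List.idxOf x M < List.idxOf t M := by
  have h1 : List.idxOf x M = List.idxOf x (twD t M) := (twD_indexOf hx).symm
  have h2 : List.idxOf x (twD t M) < (twD t M).length :=
    List.idxOf_lt_length_iff.mpr hx
  have h3 : t ∉ twD t M := fun hm => (twD_ne hm) rfl
  have h4 := indexOf_append_right (Q := M.dropWhile (fun y => y != t)) h3
  rw [show twD t M ++ M.dropWhile (fun y => y != t) = M from
    List.takeWhile_append_dropWhile] at h4
  omega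

/-- The descent along an adapted chain ends exactly at the minimal chain
element `a`. -/
lemma ddD_chain {n : ℕ} (hn : 4 ≤ n) :
    ∀ (E : List ℕ) (a : ℕ), 1 ≤ a → a ≤ n-2 → E.Nodup → (∀ j ∈ E, 1 ≤ j) →
    n-2 ∉ E →
    (∀ j, a ≤ j → j ≤ n-3 → j ∈ E) →
    (∀ j, a ≤ j → j+1 ≤ n-3 → List.idxOf j E < List.idxOf (j+1) E) →
    (a = 1 ∨ a - 1 ∉ E ∨ List.idxOf a E < List.idxOf (a-1) E) →
    ddD E (n-2) = a := by
  intro E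
  induction E with
  | nil =>
    intro a ha1 ha2 _ _ _ hK1 _ _
    have : ¬ (a ≤ n-3) := fun h => List.not_mem_nil (hK1 a le_rfl h)
    rw [ddD_nil]
    omega
  | cons i E ih =>
    intro a ha1 ha2 hnd hpos hn2 hK1 hK2 hK3
    have hiE : i ∉ E := (List.nodup_cons.mp hnd).1
    have hndE : E.Nodup := (List.nodup_cons.mp hnd).2
    have hposE : ∀ j ∈ E, 1 ≤ j := fun j hj => hpos j (List.mem_cons_of_mem _ hj)
    have hn2E : n-2 ∉ E := fun h => hn2 (List.mem_cons_of_mem _ h)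
    have hi1 : 1 ≤ i := hpos i (List.mem_cons_self)
    have hin2 : i ≠ n-2 := fun h => hn2 (h ▸ List.mem_cons_self)
    by_cases hia : i = a
    · -- head is the chain minimum; recurse with `a+1`
      have han3 : a ≤ n-3 := by omega
      have IH : ddD E (n-2) = a + 1 := by
        apply ih (a+1) (by omega) (by omega) hndE hposE hn2E
        · intro j hj1 hj2
          have hj := hK1 j (by omega) hj2
          exact mem_of_cons_ne hj (by omega)
        · intro j hj1 hj2
          have h := hK2 j (by omega) hj2
          rw [List.idxOf_cons_ne _ (show i ≠ j by omega),
            List.idxOf_cons_ne _ (show i ≠ j+1 by omega)] at h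
          omega
        · right; left
          have : a + 1 - 1 = i := by omega
          rw [this]
          exact hiE
      rw [ddD_cons, IH, if_pos (show i+1 = a+1 by omega)]
      omega
    · -- head is not in the chain
      have hnotchain : ¬ (a ≤ i ∧ i ≤ n-3) := by
        rintro ⟨h1, h2⟩
        have hia' : a ≤ i - 1 := by omega
        have h := hK2 (i-1) hia' (by omega)
        have e : i - 1 + 1 = i := by omega
        rw [e, List.idxOf_cons_self] at h
        omega
      have ha1i : i ≠ a - 1 := by
        intro he
        rcases hK3 with h | h | h
        · omega
        · exact h (he ▸ List.mem_cons_self)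
        · rw [← he, List.idxOf_cons_self] at h; omega
      have IH : ddD E (n-2) = a := by
        apply ih a ha1 ha2 hndE hposE hn2E
        · intro j hj1 hj2
          have hj := hK1 j hj1 hj2
          exact mem_of_cons_ne hj (fun he => hnotchain (he ▸ ⟨hj1, hj2⟩))
        · intro j hj1 hj2
          have h := hK2 j hj1 hj2
          have hji : j ≠ i := fun he => hnotchain (he ▸ ⟨hj1, by omega⟩)
          have hji' : j + 1 ≠ i := fun he => hnotchain (he ▸ ⟨by omega, by omega⟩)
          rw [List.idxOf_cons_ne _ (Ne.symm hji), List.idxOf_cons_ne _ (Ne.symm hji')] at h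
          omega
        · rcases hK3 with h | h | h
          · exact Or.inl h
          · exact Or.inr (Or.inl (fun hm => h (List.mem_cons_of_mem _ hm)))
          · right
            by_cases hm : a - 1 ∈ E
            · right
              have haE : a ≠ i := fun he => hia he.symm
              rw [List.idxOf_cons_ne _ (Ne.symm haE),
                List.idxOf_cons_ne _ ha1i] at h
              omega
            · exact Or.inl hm
      rw [ddD_cons, IH, if_neg (by omega)]

end Stmt11
namespace Stmt11

def chainPD (n : ℕ) (ar : ℕ → ℕ → Prop) (j : ℕ) : Prop :=
  ∀ i, j ≤ i → i + 1 ≤ n - 2 → ar i (i+1)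

noncomputable def aD (n : ℕ) (ar : ℕ → ℕ → Prop) : ℕ :=
  sInf {j | 1 ≤ j ∧ chainPD n ar j}

section Quiver

variable {n : ℕ} {ar : ℕ → ℕ → Prop}

lemma ar_asymm (hor : ∀ i j, edgeD n i j → (ar i j ↔ ¬ ar j i))
    (har : ∀ i j, ar i j → edgeD n i j) {i j : ℕ} (h1 : ar i j) (h2 : ar j i) :
    False := (hor i j (har _ _ h1)).mp h1 h2

lemma ar_or (hor : ∀ i j, edgeD n i j → (ar i j ↔ ¬ ar j i)) {i j : ℕ}
    (he : edgeD n i j) : ar i j ∨ ar j i := by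
  by_cases h : ar j i
  · exact Or.inr h
  · exact Or.inl ((hor i j he).mpr h)

lemma edge_pred {j : ℕ} (h1 : 1 ≤ j) (h2 : j + 1 ≤ n - 1) : edgeD n j (j+1) :=
  Or.inl ⟨h1, rfl, h2⟩

lemma edge_spin : edgeD n (n-2) n := Or.inr (Or.inr (Or.inl ⟨rfl, rfl⟩))

lemma chainPD_mono {j j' : ℕ} (h : j ≤ j') (hc : chainPD n ar j) : chainPD n ar j' :=
  fun i h1 h2 => hc i (le_trans h h1) h2

lemma aD_mem (hn : 4 ≤ n) :
    1 ≤ aD n ar ∧ chainPD n ar (aD n ar) := by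
  have hne : (n-2) ∈ {j | 1 ≤ j ∧ chainPD n ar j} :=
    ⟨by omega, fun i h1 h2 => by exfalso; omega⟩
  exact Nat.sInf_mem ⟨n-2, hne⟩

lemma aD_le (hn : 4 ≤ n) : aD n ar ≤ n - 2 :=
  Nat.sInf_le ⟨by omega, fun i h1 h2 => by exfalso; omega⟩

lemma aD_min {j : ℕ} (h1 : 1 ≤ j) (hc : chainPD n ar j) : aD n ar ≤ j :=
  Nat.sInf_le ⟨h1, hc⟩

lemma aD_prev (hn : 4 ≤ n) (har : ∀ i j, ar i j → edgeD n i j)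
    (hor : ∀ i j, edgeD n i j → (ar i j ↔ ¬ ar j i))
    (h : 2 ≤ aD n ar) : ar (aD n ar) (aD n ar - 1) := by
  have hnc : aD n ar - 1 ∉ {j | 1 ≤ j ∧ chainPD n ar j} :=
    Nat.notMem_of_lt_sInf (show aD n ar - 1 < aD n ar by omega)
  simp only [Set.mem_setOf_eq] at hnc
  have hnc' : ¬ chainPD n ar (aD n ar - 1) := fun hc => hnc ⟨by omega, hc⟩
  have hchain : chainPD n ar (aD n ar) := (aD_mem hn).2
  rw [chainPD] at hnc'
  push_neg at hnc'
  obtain ⟨i, hi1, hi2, hi3⟩ := hnc'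
  have hie : i = aD n ar - 1 := by
    by_contra hne
    exact hi3 (hchain i (by omega) hi2)
  rw [hie] at hi3 hi2
  have he : edgeD n (aD n ar - 1) (aD n ar - 1 + 1) := edge_pred (by omega) (by omega)
  rcases ar_or hor he with h' | h'
  · exact absurd h' hi3
  · have e : aD n ar - 1 + 1 = aD n ar := by omega
    rw [e] at h'
    exact h'

/-- characterization of vertices admitting a path to `n-2`. -/
lemma reach_n2 (hn : 4 ≤ n) (har : ∀ i j, ar i j → edgeD n i j)
    (hor : ∀ i j, edgeD n i j → (ar i j ↔ ¬ ar j i)) (j : ℕ) :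
    Relation.ReflTransGen ar j (n-2) ↔
      ((aD n ar ≤ j ∧ j ≤ n-2) ∨ (j = n-1 ∧ ar (n-1) (n-2)) ∨ (j = n ∧ ar n (n-2))) := by
  constructor
  · intro h
    refine Relation.ReflTransGen.head_induction_on h (Or.inl ⟨aD_le hn, le_rfl⟩) ?_
    intro b c hbc hcr ih
    · rcases ih with ⟨hc1, hc2⟩ | ⟨hc1, hc2⟩ | ⟨hc1, hc2⟩
      · have hchc : chainPD n ar c := chainPD_mono hc1 (aD_mem hn).2
        rcases har b c hbc with ⟨hb1, hb2, hb3⟩ | ⟨hb1, hb2, hb3⟩ | ⟨hb1, hb2⟩ | ⟨hb1, hb2⟩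
        · -- b + 1 = c
          have hchb : chainPD n ar b := by
            intro i hi1 hi2
            rcases eq_or_lt_of_le hi1 with he | hlt
            · subst he
              rw [hb2]
              exact hbc
            · exact hchc i (by omega) hi2
          exact Or.inl ⟨aD_min hb1 hchb, by omega⟩
        · -- c + 1 = b
          by_cases hb : b ≤ n - 2
          · exfalso
            have := hchc c le_rfl (by omega)
            rw [hb2] at this
            exact ar_asymm hor har hbc this
          · have e1 : b = n - 1 := by omega
            have e2 : c = n - 2 := by omega
            rw [e1, e2] at hbc
            exact Or.inr (Or.inl ⟨e1, hbc⟩)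
        · omega
        · have e2 : c = n - 2 := hb2
          rw [hb1, e2] at hbc
          exact Or.inr (Or.inr ⟨hb1, hbc⟩)
      · exfalso
        rcases har b c hbc with ⟨hb1, hb2, hb3⟩ | ⟨hb1, hb2, hb3⟩ | ⟨hb1, hb2⟩ | ⟨hb1, hb2⟩
        · have e1 : b = n - 2 := by omega
          rw [e1, hc1] at hbc
          rw [hc1] at hb2
          exact ar_asymm hor har hbc hc2
        · omega
        · omega
        · omega
      · exfalso
        rcases har b c hbc with ⟨hb1, hb2, hb3⟩ | ⟨hb1, hb2, hb3⟩ | ⟨hb1, hb2⟩ | ⟨hb1, hb2⟩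
        · omega
        · omega
        · rw [hb1, hc1] at hbc
          exact ar_asymm hor har hbc hc2
        · omega
  · intro h
    rcases h with ⟨h1, h2⟩ | ⟨h1, h2⟩ | ⟨h1, h2⟩
    · have key : ∀ d jj, jj + d = n - 2 → aD n ar ≤ jj →
          Relation.ReflTransGen ar jj (n-2) := by
        intro d
        induction d with
        | zero =>
          intro jj he _
          have : jj = n - 2 := by omega
          rw [this]
        | succ d ihd =>
          intro jj he hjj
          have hstep : ar jj (jj + 1) := (aD_mem hn).2 jj hjj (by omega)
          exact Relation.ReflTransGen.head hstep (ihd (jj+1) (by omega) (by omega))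
      exact key (n - 2 - j) j (by omega) h1
    · rw [h1]
      exact Relation.ReflTransGen.single h2
    · rw [h1]
      exact Relation.ReflTransGen.single h2

/-- characterization of vertices admitting a path to `n-1`. -/
lemma reach_pred (hn : 4 ≤ n) (har : ∀ i j, ar i j → edgeD n i j) (j : ℕ) :
    Relation.ReflTransGen ar j (n-1) ↔
      (j = n-1 ∨ (ar (n-2) (n-1) ∧ Relation.ReflTransGen ar j (n-2))) := by
  constructor
  · intro h
    rcases Relation.ReflTransGen.cases_tail h with he | ⟨c, hr, hc⟩
    · exact Or.inl he.symm
    · rcases har c (n-1) hc with ⟨hb1, hb2, hb3⟩ | ⟨hb1, hb2, hb3⟩ | ⟨hb1, hb2⟩ | ⟨hb1, hb2⟩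
      · have e : c = n - 2 := by omega
        rw [e] at hc hr
        exact Or.inr ⟨hc, hr⟩
      · omega
      · omega
      · omega
  · intro h
    rcases h with he | ⟨h1, h2⟩
    · rw [he]
    · exact Relation.ReflTransGen.tail h2 h1

/-- characterization of vertices admitting a path to `n`. -/
lemma reach_top (hn : 4 ≤ n) (har : ∀ i j, ar i j → edgeD n i j) (j : ℕ) :
    Relation.ReflTransGen ar j n ↔
      (j = n ∨ (ar (n-2) n ∧ Relation.ReflTransGen ar j (n-2))) := by
  constructor
  · intro h
    rcases Relation.ReflTransGen.cases_tail h with he | ⟨c, hr, hc⟩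
    · exact Or.inl he.symm
    · rcases har c n hc with ⟨hb1, hb2, hb3⟩ | ⟨hb1, hb2, hb3⟩ | ⟨hb1, hb2⟩ | ⟨hb1, hb2⟩
      · omega
      · omega
      · rw [hb1] at hc hr
        exact Or.inr ⟨hc, hr⟩
      · omega
  · intro h
    rcases h with he | ⟨h1, h2⟩
    · rw [he]
    · exact Relation.ReflTransGen.tail h2 h1

end Quiver

/-- telescoping sum of simple roots. -/
lemma sum_alpha {n : ℕ} (hn : 4 ≤ n) {a m : ℕ} (h1 : 1 ≤ a) (h2 : a ≤ m)
    (h3 : m ≤ n - 1) :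
    ∑ j ∈ Finset.Icc a m, alphaD n j = epsD a - epsD (m+1) := by
  induction m, h2 using Nat.le_induction with
  | base => rw [Finset.Icc_self, Finset.sum_singleton, alphaD_lt (by omega)]
  | succ m hm ihm =>
    rw [Finset.sum_Icc_succ_top (by omega), ihm (by omega),
      alphaD_lt (by omega : m + 1 ≠ n), sub_add_sub_cancel]

end Stmt11
namespace Stmt11

section Eta

variable {n : ℕ} {ar : ℕ → ℕ → Prop}
lemma eta_pred_src (hn : 4 ≤ n) (har : ∀ i j, ar i j → edgeD n i j)
    (hor : ∀ i j, edgeD n i j → (ar i j ↔ ¬ ar j i)) (hA2 : ar (n-1) (n-2)) :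
    etaD n ar (n-1) = epsD (n-1) - epsD n := by
  rw [etaD, ← Finset.sum_filter]
  have hset : (Finset.Icc 1 n).filter (fun j => Relation.ReflTransGen ar j (n-1))
      = {n-1} := by
    apply Finset.ext
    intro j
    rw [Finset.mem_filter, Finset.mem_singleton, Finset.mem_Icc]
    constructor
    · rintro ⟨_, hr⟩
      rcases (reach_pred hn har j).mp hr with he | ⟨h2, _⟩
      · exact he
      · exact absurd h2 (fun h => ar_asymm hor har hA2 h)
    · rintro rfl
      exact ⟨⟨by omega, by omega⟩, Relation.ReflTransGen.refl⟩
  rw [hset, Finset.sum_singleton, alphaD_lt (by omega : n - 1 ≠ n),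
    (by omega : n - 1 + 1 = n)]

lemma eta_pred_sink_nn2 (hn : 4 ≤ n) (har : ∀ i j, ar i j → edgeD n i j)
    (hor : ∀ i j, edgeD n i j → (ar i j ↔ ¬ ar j i)) (hA1 : ar (n-2) (n-1)) (hB : ar (n-2) n) :
    etaD n ar (n-1) = epsD (aD n ar) - epsD n := by
  have ha1 : 1 ≤ aD n ar := (aD_mem hn).1
  have ha2 : aD n ar ≤ n - 2 := aD_le hn
  rw [etaD, ← Finset.sum_filter]
  have hset : (Finset.Icc 1 n).filter (fun j => Relation.ReflTransGen ar j (n-1))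
      = Finset.Icc (aD n ar) (n-1) := by
    apply Finset.ext
    intro j
    rw [Finset.mem_filter, Finset.mem_Icc, Finset.mem_Icc]
    constructor
    · rintro ⟨_, hr⟩
      rcases (reach_pred hn har j).mp hr with he | ⟨_, hr2⟩
      · omega
      · rcases (reach_n2 hn har hor j).mp hr2 with ⟨h1, h2⟩ | ⟨_, h2⟩ | ⟨_, h2⟩
        · omega
        · exact absurd h2 (fun h => ar_asymm hor har hA1 h)
        · exact absurd h2 (fun h => ar_asymm hor har hB h)
    · rintro ⟨h1, h2⟩
      refine ⟨⟨by omega, by omega⟩, ?_⟩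
      by_cases he : j = n-1
      · rw [he]
      · exact (reach_pred hn har j).mpr (Or.inr ⟨hA1,
          (reach_n2 hn har hor j).mpr (Or.inl ⟨h1, by omega⟩)⟩)
  rw [hset, sum_alpha hn ha1 (by omega) (by omega), (by omega : n - 1 + 1 = n)]

lemma eta_pred_sink_n2n (hn : 4 ≤ n) (har : ∀ i j, ar i j → edgeD n i j)
    (hor : ∀ i j, edgeD n i j → (ar i j ↔ ¬ ar j i)) (hA1 : ar (n-2) (n-1)) (hB : ar n (n-2)) :
    etaD n ar (n-1) = epsD (aD n ar) + epsD (n-1) := by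
  have ha1 : 1 ≤ aD n ar := (aD_mem hn).1
  have ha2 : aD n ar ≤ n - 2 := aD_le hn
  rw [etaD, ← Finset.sum_filter]
  have hset : (Finset.Icc 1 n).filter (fun j => Relation.ReflTransGen ar j (n-1))
      = insert n (Finset.Icc (aD n ar) (n-1)) := by
    apply Finset.ext
    intro j
    rw [Finset.mem_filter, Finset.mem_insert, Finset.mem_Icc, Finset.mem_Icc]
    constructor
    · rintro ⟨_, hr⟩
      rcases (reach_pred hn har j).mp hr with he | ⟨_, hr2⟩
      · right; omega
      · rcases (reach_n2 hn har hor j).mp hr2 with ⟨h1, h2⟩ | ⟨_, h2⟩ | ⟨h1, _⟩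
        · right; omega
        · exact absurd h2 (fun h => ar_asymm hor har hA1 h)
        · left; exact h1
    · intro hj
      rcases hj with he | ⟨h1, h2⟩
      · refine ⟨⟨by omega, by omega⟩, ?_⟩
        rw [he]
        exact (reach_pred hn har n).mpr (Or.inr ⟨hA1,
          (reach_n2 hn har hor n).mpr (Or.inr (Or.inr ⟨rfl, hB⟩))⟩)
      · refine ⟨⟨by omega, by omega⟩, ?_⟩
        by_cases he : j = n-1
        · rw [he]
        · exact (reach_pred hn har j).mpr (Or.inr ⟨hA1,
            (reach_n2 hn har hor j).mpr (Or.inl ⟨h1, by omega⟩)⟩)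
  rw [hset, Finset.sum_insert (by rw [Finset.mem_Icc]; omega),
    sum_alpha hn ha1 (by omega) (by omega), (by omega : n - 1 + 1 = n), alphaD_n]
  abel

lemma eta_top_src (hn : 4 ≤ n) (har : ∀ i j, ar i j → edgeD n i j)
    (hor : ∀ i j, edgeD n i j → (ar i j ↔ ¬ ar j i)) (hB : ar n (n-2)) :
    etaD n ar n = epsD (n-1) + epsD n := by
  rw [etaD, ← Finset.sum_filter]
  have hset : (Finset.Icc 1 n).filter (fun j => Relation.ReflTransGen ar j n)
      = {n} := by
    apply Finset.ext
    intro j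
    rw [Finset.mem_filter, Finset.mem_singleton, Finset.mem_Icc]
    constructor
    · rintro ⟨_, hr⟩
      rcases (reach_top hn har j).mp hr with he | ⟨h2, _⟩
      · exact he
      · exact absurd h2 (fun h => ar_asymm hor har hB h)
    · rintro rfl
      exact ⟨⟨by omega, le_rfl⟩, Relation.ReflTransGen.refl⟩
  rw [hset, Finset.sum_singleton, alphaD_n]

lemma eta_top_sink_A1 (hn : 4 ≤ n) (har : ∀ i j, ar i j → edgeD n i j)
    (hor : ∀ i j, edgeD n i j → (ar i j ↔ ¬ ar j i)) (hB : ar (n-2) n) (hA1 : ar (n-2) (n-1)) :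
    etaD n ar n = epsD (aD n ar) + epsD n := by
  have ha1 : 1 ≤ aD n ar := (aD_mem hn).1
  have ha2 : aD n ar ≤ n - 2 := aD_le hn
  rw [etaD, ← Finset.sum_filter]
  have hset : (Finset.Icc 1 n).filter (fun j => Relation.ReflTransGen ar j n)
      = insert n (Finset.Icc (aD n ar) (n-2)) := by
    apply Finset.ext
    intro j
    rw [Finset.mem_filter, Finset.mem_insert, Finset.mem_Icc, Finset.mem_Icc]
    constructor
    · rintro ⟨_, hr⟩
      rcases (reach_top hn har j).mp hr with he | ⟨_, hr2⟩
      · left; exact he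
      · rcases (reach_n2 hn har hor j).mp hr2 with ⟨h1, h2⟩ | ⟨_, h2⟩ | ⟨_, h2⟩
        · right; omega
        · exact absurd h2 (fun h => ar_asymm hor har hA1 h)
        · exact absurd h2 (fun h => ar_asymm hor har hB h)
    · intro hj
      rcases hj with rfl | ⟨h1, h2⟩
      · exact ⟨⟨by omega, le_rfl⟩, Relation.ReflTransGen.refl⟩
      · exact ⟨⟨by omega, by omega⟩, (reach_top hn har j).mpr (Or.inr ⟨hB,
          (reach_n2 hn har hor j).mpr (Or.inl ⟨h1, h2⟩)⟩)⟩
  rw [hset, Finset.sum_insert (by rw [Finset.mem_Icc]; omega),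
    sum_alpha hn ha1 (by omega) (by omega), (by omega : n - 2 + 1 = n - 1), alphaD_n]
  abel

lemma eta_top_sink_A2 (hn : 4 ≤ n) (har : ∀ i j, ar i j → edgeD n i j)
    (hor : ∀ i j, edgeD n i j → (ar i j ↔ ¬ ar j i)) (hB : ar (n-2) n) (hA2 : ar (n-1) (n-2)) :
    etaD n ar n = epsD (aD n ar) + epsD (n-1) := by
  have ha1 : 1 ≤ aD n ar := (aD_mem hn).1
  have ha2 : aD n ar ≤ n - 2 := aD_le hn
  rw [etaD, ← Finset.sum_filter]
  have hset : (Finset.Icc 1 n).filter (fun j => Relation.ReflTransGen ar j n)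
      = insert n (insert (n-1) (Finset.Icc (aD n ar) (n-2))) := by
    apply Finset.ext
    intro j
    rw [Finset.mem_filter, Finset.mem_insert, Finset.mem_insert,
      Finset.mem_Icc, Finset.mem_Icc]
    constructor
    · rintro ⟨_, hr⟩
      rcases (reach_top hn har j).mp hr with he | ⟨_, hr2⟩
      · left; exact he
      · rcases (reach_n2 hn har hor j).mp hr2 with ⟨h1, h2⟩ | ⟨h1, _⟩ | ⟨_, h2⟩
        · right; right; omega
        · right; left; exact h1
        · exact absurd h2 (fun h => ar_asymm hor har hB h)
    · intro hj
      rcases hj with rfl | rfl | ⟨h1, h2⟩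
      · exact ⟨⟨by omega, le_rfl⟩, Relation.ReflTransGen.refl⟩
      · exact ⟨⟨by omega, by omega⟩, (reach_top hn har (n-1)).mpr (Or.inr ⟨hB,
          (reach_n2 hn har hor (n-1)).mpr (Or.inr (Or.inl ⟨rfl, hA2⟩))⟩)⟩
      · exact ⟨⟨by omega, by omega⟩, (reach_top hn har j).mpr (Or.inr ⟨hB,
          (reach_n2 hn har hor j).mpr (Or.inl ⟨h1, h2⟩)⟩)⟩
  rw [hset, Finset.sum_insert (by
      rw [Finset.mem_insert, Finset.mem_Icc]; push_neg
      exact ⟨by omega, by omega⟩),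
    Finset.sum_insert (by rw [Finset.mem_Icc]; omega),
    sum_alpha hn ha1 (by omega) (by omega), (by omega : n - 2 + 1 = n - 1),
    alphaD_n, alphaD_lt (by omega : n - 1 ≠ n), (by omega : n - 1 + 1 = n)]
  abel

end Eta

end Stmt11
namespace Stmt11

lemma coxD_neg (n : ℕ) (M : List ℕ) (v : ℕ → ℤ) :
    coxD n M (-v) = - coxD n M v := by
  have := coxD_smul n M (-1) v
  simpa using this

lemma coxD_sub (n : ℕ) (M : List ℕ) (u v : ℕ → ℤ) :
    coxD n M (u - v) = coxD n M u - coxD n M v := by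
  rw [sub_eq_add_neg, coxD_add, coxD_neg, ← sub_eq_add_neg]

lemma coxD_iter_add (n : ℕ) (M : List ℕ) (m : ℕ) (u v : ℕ → ℤ) :
    (coxD n M)^[m] (u + v) = (coxD n M)^[m] u + (coxD n M)^[m] v := by
  induction m generalizing u v with
  | zero => rfl
  | succ m ih =>
    rw [Function.iterate_succ_apply, Function.iterate_succ_apply,
      Function.iterate_succ_apply, coxD_add, ih]

lemma coxD_iter_smul (n : ℕ) (M : List ℕ) (m : ℕ) (c : ℤ) (v : ℕ → ℤ) :
    (coxD n M)^[m] (c • v) = c • (coxD n M)^[m] v := by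
  induction m generalizing v with
  | zero => rfl
  | succ m ih =>
    rw [Function.iterate_succ_apply, Function.iterate_succ_apply, coxD_smul, ih]

lemma iter_neg_eps {n : ℕ} {M : List ℕ} {e : ℕ} (h : coxD n M (epsD e) = -epsD e)
    (m : ℕ) :
    (coxD n M)^[m] (epsD e) = epsD e ∨ (coxD n M)^[m] (epsD e) = -epsD e := by
  induction m with
  | zero => exact Or.inl rfl
  | succ m ih =>
    rw [Function.iterate_succ_apply']
    rcases ih with h' | h' <;> rw [h']
    · exact Or.inr h
    · rw [coxD_neg, h, neg_neg]
      exact Or.inl rfl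

lemma traceD_sign (n : ℕ) (M : List ℕ) (s : ℤ) (m : ℕ) :
    traceD n M (s, m) = (s * (traceD n M (1, m)).1, (traceD n M (1, m)).2) := by
  induction M with
  | nil => simp
  | cons i M ih =>
    rw [traceD_cons, traceD_cons, ih]
    rcases htr : traceD n M ((1:ℤ), m) with ⟨t, b⟩
    rw [stepD_sign n i (s * t) b, stepD_sign n i t b]
    simp [mul_assoc]

lemma iter_eps_form {n : ℕ} (hn : 4 ≤ n) (L : List ℕ)
    (hL : ∀ j ∈ L, 1 ≤ j ∧ j ≤ n) {c : ℕ} (hc1 : 1 ≤ c) (hc2 : c ≤ n) (m : ℕ) :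
    ∃ (s : ℤ) (a : ℕ), (s = 1 ∨ s = -1) ∧ 1 ≤ a ∧ a ≤ n ∧
      (coxD n L)^[m] (epsD c) = s • epsD a := by
  induction m with
  | zero => exact ⟨1, c, Or.inl rfl, hc1, hc2, (one_smul _ _).symm⟩
  | succ m ih =>
    obtain ⟨s, a, hs, ha1, ha2, he⟩ := ih
    rw [Function.iterate_succ_apply', he, coxD_trace hn L hL s ha1 ha2]
    have hr := traceD_range hn L hL s (m := a) ha1 ha2
    have hsg := traceD_sign n L s a
    have hunit := traceD_sign_unit n L a
    refine ⟨(traceD n L (s, a)).1, (traceD n L (s, a)).2, ?_, hr.1, hr.2, rfl⟩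
    rw [hsg]
    rcases hs with h | h <;> rcases hunit with h' | h' <;> rw [h, h'] <;> norm_num

lemma posroot_coords {n : ℕ} {v : ℕ → ℤ} (h : IsPosRootD n v) :
    ∃ i j, 1 ≤ i ∧ i < j ∧ j ≤ n ∧ v i = 1 ∧ (v j = 1 ∨ v j = -1) ∧
      ∀ k, k ≠ i → k ≠ j → v k = 0 := by
  obtain ⟨i, j, h1, h2, h3, h4 | h4⟩ := h <;> subst h4 <;>
    refine ⟨i, j, h1, h2, h3, ?_, ?_, ?_⟩
  · simp [epsD_apply, show i ≠ j by omega]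
  · right; simp [epsD_apply, show j ≠ i by omega]
  · intro k hk1 hk2
    simp [epsD_apply, hk1, hk2]
  · simp [epsD_apply, show i ≠ j by omega]
  · left; simp [epsD_apply, show j ≠ i by omega]
  · intro k hk1 hk2
    simp [epsD_apply, hk1, hk2]

lemma final_pair {n : ℕ} (hn : 4 ≤ n) {α β : ℕ → ℤ} {s t : ℤ} {a e : ℕ}
    (hs : s = 1 ∨ s = -1) (ht : t = 1 ∨ t = -1)
    (ha1 : 1 ≤ a) (ha2 : a ≤ n) (he1 : 1 ≤ e) (he2 : e ≤ n)
    (hαβ : α + β = (2:ℤ) • (s • epsD a)) (hαβ' : α - β = (2:ℤ) • (t • epsD e))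
    (hα : IsPosRootD n α) (hβ : IsPosRootD n β) :
    a < e ∧ s = 1 ∧ ((α = epsD a + epsD e ∧ β = epsD a - epsD e) ∨
                     (α = epsD a - epsD e ∧ β = epsD a + epsD e)) := by
  have hαv : ∀ k, α k = s * epsD a k + t * epsD e k := by
    intro k
    have h1 := congrFun hαβ k
    have h2 := congrFun hαβ' k
    simp only [Pi.add_apply, Pi.sub_apply, Pi.smul_apply, smul_eq_mul] at h1 h2
    linarith
  have hβv : ∀ k, β k = s * epsD a k - t * epsD e k := by
    intro k
    have h1 := congrFun hαβ k
    have h2 := congrFun hαβ' k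
    simp only [Pi.add_apply, Pi.sub_apply, Pi.smul_apply, smul_eq_mul] at h1 h2
    linarith
  obtain ⟨i, j, hi1, hij, hjn, hvi, hvj, hsupp⟩ := posroot_coords hα
  have hane : a ≠ e := by
    intro he
    subst he
    have hri : α i ≠ 0 := by rw [hvi]; norm_num
    have hrj : α j ≠ 0 := by rcases hvj with h | h <;> rw [h] <;> norm_num
    have hia : i = a := by
      by_contra hne
      exact hri (by rw [hαv i]; simp [epsD_apply, hne])
    have hja : j = a := by
      by_contra hne
      exact hrj (by rw [hαv j]; simp [epsD_apply, hne])
    omega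
  have hαa : α a = s := by rw [hαv a]; simp [epsD_apply, hane]
  have hαe : α e = t := by rw [hαv e]; simp [epsD_apply, Ne.symm hane]
  have hβa : β a = s := by rw [hβv a]; simp [epsD_apply, hane]
  have hβe : β e = -t := by rw [hβv e]; simp [epsD_apply, Ne.symm hane]
  have hsne : s ≠ 0 := by rcases hs with h | h <;> rw [h] <;> norm_num
  have htne : t ≠ 0 := by rcases ht with h | h <;> rw [h] <;> norm_num
  have hamem : a = i ∨ a = j := by
    by_contra hcon
    push_neg at hcon
    exact hsne ((hαa.symm).trans (hsupp a hcon.1 hcon.2))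
  have hemem : e = i ∨ e = j := by
    by_contra hcon
    push_neg at hcon
    exact htne ((hαe.symm).trans (hsupp e hcon.1 hcon.2))
  have hcase : (i = a ∧ j = e) ∨ (i = e ∧ j = a) := by omega
  rcases hcase with ⟨hia, hje⟩ | ⟨hie, hja⟩
  · -- a < e
    have hae : a < e := by omega
    have hs1 : s = 1 := by
      rw [hia] at hvi
      rw [← hαa]
      exact hvi
    refine ⟨hae, hs1, ?_⟩
    rcases ht with htt | htt
    · left
      constructor
      · funext k
        rw [hαv k, hs1, htt]
        simp only [Pi.add_apply]
        ring
      · funext k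
        rw [hβv k, hs1, htt]
        simp only [Pi.sub_apply]
        ring
    · right
      constructor
      · funext k
        rw [hαv k, hs1, htt]
        simp only [Pi.sub_apply]
        ring
      · funext k
        rw [hβv k, hs1, htt]
        simp only [Pi.add_apply]
        ring
  · -- e < a : impossible using β
    exfalso
    obtain ⟨i', j', hi1', hij', hjn', hvi', hvj', hsupp'⟩ := posroot_coords hβ
    have ht1 : t = 1 := by
      rw [hie] at hvi
      rw [← hαe]
      exact hvi
    have hβe' : β e = -1 := by rw [hβe, ht1]
    have hamem' : a = i' ∨ a = j' := by
      by_contra hcon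
      push_neg at hcon
      exact hsne ((hβa.symm).trans (hsupp' a hcon.1 hcon.2))
    have hemem' : e = i' ∨ e = j' := by
      by_contra hcon
      push_neg at hcon
      have := hsupp' e hcon.1 hcon.2
      rw [hβe'] at this
      norm_num at this
    have hcase' : (i' = a ∧ j' = e) ∨ (i' = e ∧ j' = a) := by omega
    rcases hcase' with ⟨hia', hje'⟩ | ⟨hie', hja'⟩
    · omega
    · rw [hie'] at hvi'
      rw [hβe'] at hvi'
      norm_num at hvi'
end Stmt11
namespace Stmt11

lemma coxD_iter_sub (n : ℕ) (M : List ℕ) (m : ℕ) (u v : ℕ → ℤ) :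
    (coxD n M)^[m] (u - v) = (coxD n M)^[m] u - (coxD n M)^[m] v := by
  induction m generalizing u v with
  | zero => rfl
  | succ m ih =>
    rw [Function.iterate_succ_apply, Function.iterate_succ_apply,
      Function.iterate_succ_apply, coxD_sub, ih]

lemma located_pair {n : ℕ} (hn : 4 ≤ n) (L : List ℕ) (hL : ∀ j ∈ L, 1 ≤ j ∧ j ≤ n)
    {u v α β : ℕ → ℤ} {c e : ℕ} {t0 : ℤ} (m : ℕ)
    (hc1 : 1 ≤ c) (hc2 : c ≤ n) (he1 : 1 ≤ e) (he2 : e ≤ n)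
    (ht0 : t0 = 1 ∨ t0 = -1)
    (huv : u + v = (2:ℤ) • epsD c) (huv' : u - v = (2:ℤ) • (t0 • epsD e))
    (hTe : coxD n L (epsD e) = -epsD e)
    (hα : α = (coxD n L)^[m] u) (hβ : β = (coxD n L)^[m] v)
    (hαpos : IsPosRootD n α) (hβpos : IsPosRootD n β) :
    ∃ a, 1 ≤ a ∧ a < e ∧ α + β = (2:ℤ) • epsD a ∧
      ((α = epsD a + epsD e ∧ β = epsD a - epsD e) ∨
       (α = epsD a - epsD e ∧ β = epsD a + epsD e)) := by
  obtain ⟨s, a, hs, ha1, ha2, hiter⟩ := iter_eps_form hn L hL hc1 hc2 m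
  have hsum : α + β = (2:ℤ) • (s • epsD a) := by
    rw [hα, hβ, ← coxD_iter_add, huv, coxD_iter_smul, hiter]
  have hdiff : ∃ t, (t = 1 ∨ t = -1) ∧ α - β = (2:ℤ) • (t • epsD e) := by
    have hbase : α - β = (2:ℤ) • (t0 • (coxD n L)^[m] (epsD e)) := by
      rw [hα, hβ, ← coxD_iter_sub, huv', coxD_iter_smul, coxD_iter_smul]
    rcases iter_neg_eps hTe m with h | h
    · exact ⟨t0, ht0, by rw [hbase, h]⟩
    · refine ⟨-t0, ?_, ?_⟩
      · rcases ht0 with h' | h' <;> rw [h']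
        · right; rfl
        · left; norm_num
      · rw [hbase, h, smul_neg, ← neg_smul]
  obtain ⟨t, ht, hdiff⟩ := hdiff
  obtain ⟨hae, hs1, hpair⟩ :=
    final_pair hn hs ht ha1 ha2 he1 he2 hsum hdiff hαpos hβpos
  refine ⟨a, ha1, hae, ?_, hpair⟩
  rw [hsum, hs1, one_smul]

lemma dd_eq_aD {n : ℕ} (hn : 4 ≤ n) {ar : ℕ → ℕ → Prop}
    (har : ∀ i j, ar i j → edgeD n i j)
    (hor : ∀ i j, edgeD n i j → (ar i j ↔ ¬ ar j i))
    (L : List ℕ) (hLnd : L.Nodup)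
    (hLmem : ∀ i, i ∈ L ↔ 1 ≤ i ∧ i ≤ n)
    (hadapt : ∀ i j, ar i j → L.idxOf i < L.idxOf j) :
    ddD (twD (n-2) L) (n-2) = aD n ar := by
  have ha1 : 1 ≤ aD n ar := (aD_mem hn).1
  have ha2 : aD n ar ≤ n - 2 := aD_le hn
  have hchain : chainPD n ar (aD n ar) := (aD_mem hn).2
  have hm2 : n - 2 ∈ L := (hLmem _).mpr ⟨by omega, by omega⟩
  have befL : ∀ j, aD n ar ≤ j → j + 1 ≤ n - 2 → befD L j (j+1) := by
    intro j h1 h2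
    exact ⟨(hLmem _).mpr ⟨by omega, by omega⟩, (hLmem _).mpr ⟨by omega, by omega⟩,
      hadapt _ _ (hchain j h1 h2)⟩
  have hto : ∀ d j, j + d = n - 2 → aD n ar ≤ j → (j = n-2 ∨ befD L j (n-2)) := by
    intro d
    induction d with
    | zero => intro j h _; left; omega
    | succ d ihd =>
      intro j h hj
      right
      have hstep := befL j hj (by omega)
      rcases ihd (j+1) (by omega) (by omega) with h' | h'
      · rwa [h'] at hstep
      · exact befD_trans hstep h'
  have hK1 : ∀ j, aD n ar ≤ j → j ≤ n-3 → j ∈ twD (n-2) L := by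
    intro j h1 h2
    rcases hto (n-2-j) j (by omega) h1 with h' | h'
    · omega
    · exact mem_twD_of_lt h'.1 h'.2.2
  apply ddD_chain hn (twD (n-2) L) (aD n ar) ha1 ha2
  · exact List.Nodup.sublist (List.takeWhile_sublist _) hLnd
  · exact fun j hj => ((hLmem j).mp (twD_subset hj)).1
  · exact fun h => (twD_ne h) rfl
  · exact hK1
  · intro j h1 h2
    have hbj := befL j h1 (by omega)
    have hj1 : j ∈ twD (n-2) L := hK1 j h1 (by omega)
    have hj2 : j+1 ∈ twD (n-2) L := hK1 (j+1) (by omega) h2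
    rw [twD_indexOf hj1, twD_indexOf hj2]
    exact hbj.2.2
  · by_cases hA : aD n ar = 1
    · exact Or.inl hA
    · have hprev := aD_prev hn har hor (by omega)
      by_cases hm : aD n ar - 1 ∈ twD (n-2) L
      · by_cases han3 : aD n ar ≤ n-3
        · right; right
          have haE : aD n ar ∈ twD (n-2) L := hK1 _ le_rfl han3
          rw [twD_indexOf haE, twD_indexOf hm]
          exact hadapt _ _ hprev
        · exfalso
          have h1 := twD_lt hm hm2
          have h2 := hadapt _ _ hprev
          have he : aD n ar = n-2 := by omega
          rw [he] at h1 h2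
          omega
      · exact Or.inr (Or.inl hm)

end Stmt11
open Stmt11 in
/-- in the AR quiver `Γ_Q` of a Dynkin quiver `Q` of type `D_n`, if
positive roots `α, β` are located at `(n-1, k)` and `(n, k)` respectively, then
`α + β = 2ε_a` for some `1 ≤ a ≤ n-1`; moreover `{α, β} = {ε_a + ε_n, ε_a - ε_n}`
if `ξ_{n-1} = ξ_n`, and `{α, β} = {ε_a + ε_{n-1}, ε_a - ε_{n-1}}` if
`|ξ_{n-1} - ξ_n| = 2`. -/
theorem stmt11 (n : ℕ) (hn : 4 ≤ n)
    -- the quiver `Q`: an orientation `ar` of the type `D_n` diagram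
    (ar : ℕ → ℕ → Prop) (har : ∀ i j, ar i j → edgeD n i j)
    (hor : ∀ i j, edgeD n i j → (ar i j ↔ ¬ ar j i))
    -- a height function on `Q`
    (ξ : ℕ → ℤ) (hξ : ∀ i j, ar i j → ξ j = ξ i - 1)
    -- an enumeration of the vertices adapted to `Q`, giving the Coxeter element `τ = coxD n L`
    (L : List ℕ) (hLnd : L.Nodup) (hLmem : ∀ i, i ∈ L ↔ 1 ≤ i ∧ i ≤ n)
    (hadapt : ∀ i j, ar i j → L.idxOf i < L.idxOf j)
    (α β : ℕ → ℤ) (k : ℤ)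
    (hα : LocatedAt n ar L ξ α (n - 1) k) (hβ : LocatedAt n ar L ξ β n k) :
    ∃ a : ℕ, 1 ≤ a ∧ a ≤ n - 1 ∧ α + β = (2 : ℤ) • epsD a ∧
      (ξ (n - 1) = ξ n →
        (α = epsD a + epsD n ∧ β = epsD a - epsD n) ∨
        (α = epsD a - epsD n ∧ β = epsD a + epsD n)) ∧
      (|ξ (n - 1) - ξ n| = 2 →
        (α = epsD a + epsD (n - 1) ∧ β = epsD a - epsD (n - 1)) ∨
        (α = epsD a - epsD (n - 1) ∧ β = epsD a + epsD (n - 1))) := by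
  obtain ⟨k1, hposα, hαdef, hk1⟩ := hα
  obtain ⟨k2, hposβ, hβdef, hk2⟩ := hβ
  have hL : ∀ j ∈ L, 1 ≤ j ∧ j ≤ n := fun j hj => (hLmem j).mp hj
  have hm1 : n - 1 ∈ L := (hLmem _).mpr ⟨by omega, by omega⟩
  have hm2 : n - 2 ∈ L := (hLmem _).mpr ⟨by omega, by omega⟩
  have hmn : n ∈ L := (hLmem _).mpr ⟨by omega, le_rfl⟩
  have he1 : edgeD n (n-2) (n-1) := by
    have h := edge_pred (n := n) (j := n-2) (by omega) (by omega)
    rwa [(by omega : n-2+1 = n-1)] at h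
  have he2 : edgeD n (n-2) n := edge_spin
  have ha1 : 1 ≤ aD n ar := (aD_mem hn).1
  have ha2 : aD n ar ≤ n - 2 := aD_le hn
  rcases ar_or hor he1 with hA1 | hA2 <;> rcases ar_or hor he2 with hB1 | hB2
  · -- Case 1: ar (n-2) (n-1), ar (n-2) n : ξ(n-1) = ξ(n)
    have hξa := hξ _ _ hA1
    have hξb := hξ _ _ hB1
    have hd : ξ (n-1) = ξ n := by omega
    have hkk : k1 = k2 := by omega
    rw [← hkk] at hβdef
    have hTn : coxD n L (epsD n) = -epsD n := by
      have hco := coxD_trace hn L hL 1 (m := n) (by omega) le_rfl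
      rcases befD_total hm1 hmn (by omega) with hb | hb
      · rw [masterA hn L hLnd (fun _ => hb)
          (Or.inr (fun _ => ⟨hm2, hm1, hadapt _ _ hA1⟩)), if_pos hm1] at hco
        simpa using hco
      · rw [masterB hn L hLnd (fun _ => hb)
          (Or.inr (fun _ => ⟨hm2, hmn, hadapt _ _ hB1⟩)), if_pos hmn] at hco
        simpa using hco
    have hu : etaD n ar (n-1) = epsD (aD n ar) - epsD n :=
      eta_pred_sink_nn2 hn har hor hA1 hB1
    have hv : etaD n ar n = epsD (aD n ar) + epsD n :=
      eta_top_sink_A1 hn har hor hB1 hA1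
    have huv : etaD n ar (n-1) + etaD n ar n = (2:ℤ) • epsD (aD n ar) := by
      rw [hu, hv]; funext x
      simp only [Pi.add_apply, Pi.sub_apply, Pi.smul_apply, smul_eq_mul]
      ring
    have huv' : etaD n ar (n-1) - etaD n ar n = (2:ℤ) • ((-1:ℤ) • epsD n) := by
      rw [hu, hv]; funext x
      simp only [Pi.add_apply, Pi.sub_apply, Pi.smul_apply, smul_eq_mul]
      ring
    obtain ⟨a, haa1, hae, hsum, hpair⟩ :=
      located_pair hn L hL k1 ha1 (by omega) (by omega : 1 ≤ n) le_rfl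
        (Or.inr rfl) huv huv' hTn hαdef hβdef hposα hposβ
    refine ⟨a, haa1, by omega, hsum, fun _ => hpair, fun habs => ?_⟩
    exfalso
    rw [hd, sub_self, abs_zero] at habs
    norm_num at habs
  · -- Case 2: ar (n-2) (n-1), ar n (n-2) : ξ(n-1) = ξ(n) - 2
    have hξa := hξ _ _ hA1
    have hξb := hξ _ _ hB2
    have hkk : k2 = k1 + 1 := by omega
    rw [hkk, Function.iterate_succ_apply] at hβdef
    have hbef1 : n ∈ L → befD L n (n-2) := fun _ => ⟨hmn, hm2, hadapt _ _ hB2⟩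
    have hbef2 : n-2 ∈ L → befD L (n-2) (n-1) := fun _ => ⟨hm2, hm1, hadapt _ _ hA1⟩
    have hdd := dd_eq_aD hn har hor L hLnd hLmem hadapt
    have hTn : coxD n L (epsD n) = epsD (aD n ar) := by
      have hco := coxD_trace hn L hL 1 (m := n) (by omega) le_rfl
      rw [masterE hn L hLnd hbef1 hbef2, if_pos hm1, if_pos hm2, hdd] at hco
      simpa using hco
    have hTn1 : coxD n L (epsD (n-1)) = -epsD (n-1) := by
      have hco := coxD_trace hn L hL 1 (m := n-1) (by omega) (by omega)
      rw [masterF hn L hLnd hbef1 hbef2, if_pos hmn] at hco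
      simpa using hco
    have hu : etaD n ar (n-1) = epsD (aD n ar) + epsD (n-1) :=
      eta_pred_sink_n2n hn har hor hA1 hB2
    have hv : coxD n L (etaD n ar n) = -epsD (n-1) + epsD (aD n ar) := by
      rw [eta_top_src hn har hor hB2, coxD_add, hTn1, hTn]
    have huv : etaD n ar (n-1) + coxD n L (etaD n ar n) =
        (2:ℤ) • epsD (aD n ar) := by
      rw [hu, hv]; funext x
      simp only [Pi.add_apply, Pi.neg_apply, Pi.smul_apply, smul_eq_mul]
      ring
    have huv' : etaD n ar (n-1) - coxD n L (etaD n ar n) =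
        (2:ℤ) • ((1:ℤ) • epsD (n-1)) := by
      rw [hu, hv]; funext x
      simp only [Pi.add_apply, Pi.sub_apply, Pi.neg_apply, Pi.smul_apply, smul_eq_mul]
      ring
    obtain ⟨a, haa1, hae, hsum, hpair⟩ :=
      located_pair hn L hL k1 ha1 (by omega) (by omega : 1 ≤ n - 1) (by omega)
        (Or.inl rfl) huv huv' hTn1 hαdef hβdef hposα hposβ
    refine ⟨a, haa1, by omega, hsum, fun habs => ?_, fun _ => hpair⟩
    exfalso
    omega
  · -- Case 3: ar (n-1) (n-2), ar (n-2) n : ξ(n-1) = ξ(n) + 2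
    have hξa := hξ _ _ hA2
    have hξb := hξ _ _ hB1
    have hkk : k1 = k2 + 1 := by omega
    rw [hkk, Function.iterate_succ_apply] at hαdef
    have hbef1 : n-1 ∈ L → befD L (n-1) (n-2) := fun _ => ⟨hm1, hm2, hadapt _ _ hA2⟩
    have hbef2 : n-2 ∈ L → befD L (n-2) n := fun _ => ⟨hm2, hmn, hadapt _ _ hB1⟩
    have hdd := dd_eq_aD hn har hor L hLnd hLmem hadapt
    have hTn : coxD n L (epsD n) = -epsD (aD n ar) := by
      have hco := coxD_trace hn L hL 1 (m := n) (by omega) le_rfl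
      rw [masterC hn L hLnd hbef1 hbef2, if_pos hmn, if_pos hm2, hdd] at hco
      simpa using hco
    have hTn1 : coxD n L (epsD (n-1)) = -epsD (n-1) := by
      have hco := coxD_trace hn L hL 1 (m := n-1) (by omega) (by omega)
      rw [masterD hn L hLnd hbef1 hbef2, if_pos hm1] at hco
      simpa using hco
    have hu : coxD n L (etaD n ar (n-1)) = -epsD (n-1) + epsD (aD n ar) := by
      rw [eta_pred_src hn har hor hA2, coxD_sub, hTn1, hTn]
      funext x
      simp only [Pi.add_apply, Pi.sub_apply, Pi.neg_apply]
      ring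
    have hv : etaD n ar n = epsD (aD n ar) + epsD (n-1) :=
      eta_top_sink_A2 hn har hor hB1 hA2
    have huv : coxD n L (etaD n ar (n-1)) + etaD n ar n =
        (2:ℤ) • epsD (aD n ar) := by
      rw [hu, hv]; funext x
      simp only [Pi.add_apply, Pi.neg_apply, Pi.smul_apply, smul_eq_mul]
      ring
    have huv' : coxD n L (etaD n ar (n-1)) - etaD n ar n =
        (2:ℤ) • ((-1:ℤ) • epsD (n-1)) := by
      rw [hu, hv]; funext x
      simp only [Pi.add_apply, Pi.sub_apply, Pi.neg_apply, Pi.smul_apply, smul_eq_mul]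
      ring
    obtain ⟨a, haa1, hae, hsum, hpair⟩ :=
      located_pair hn L hL k2 ha1 (by omega) (by omega : 1 ≤ n - 1) (by omega)
        (Or.inr rfl) huv huv' hTn1 hαdef hβdef hposα hposβ
    refine ⟨a, haa1, by omega, hsum, fun habs => ?_, fun _ => hpair⟩
    exfalso
    omega
  · -- Case 4: ar (n-1) (n-2), ar n (n-2) : ξ(n-1) = ξ(n)
    have hξa := hξ _ _ hA2
    have hξb := hξ _ _ hB2
    have hd : ξ (n-1) = ξ n := by omega
    have hkk : k1 = k2 := by omega
    rw [← hkk] at hβdef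
    have hTn : coxD n L (epsD n) = -epsD n := by
      have hco := coxD_trace hn L hL 1 (m := n) (by omega) le_rfl
      rcases befD_total hm1 hmn (by omega) with hb | hb
      · rw [masterA hn L hLnd (fun _ => hb)
          (Or.inl (fun _ => ⟨hmn, hm2, hadapt _ _ hB2⟩)), if_pos hm1] at hco
        simpa using hco
      · rw [masterB hn L hLnd (fun _ => hb)
          (Or.inl (fun _ => ⟨hm1, hm2, hadapt _ _ hA2⟩)), if_pos hmn] at hco
        simpa using hco
    have hu : etaD n ar (n-1) = epsD (n-1) - epsD n := eta_pred_src hn har hor hA2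
    have hv : etaD n ar n = epsD (n-1) + epsD n := eta_top_src hn har hor hB2
    have huv : etaD n ar (n-1) + etaD n ar n = (2:ℤ) • epsD (n-1) := by
      rw [hu, hv]; funext x
      simp only [Pi.add_apply, Pi.sub_apply, Pi.smul_apply, smul_eq_mul]
      ring
    have huv' : etaD n ar (n-1) - etaD n ar n = (2:ℤ) • ((-1:ℤ) • epsD n) := by
      rw [hu, hv]; funext x
      simp only [Pi.add_apply, Pi.sub_apply, Pi.smul_apply, smul_eq_mul]
      ring
    obtain ⟨a, haa1, hae, hsum, hpair⟩ :=
      located_pair hn L hL k1 (by omega : 1 ≤ n - 1) (by omega) (by omega : 1 ≤ n)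
        le_rfl (Or.inr rfl) huv huv' hTn hαdef hβdef hposα hposβ
    refine ⟨a, haa1, by omega, hsum, fun _ => hpair, fun habs => ?_⟩
    exfalso
    rw [hd, sub_self, abs_zero] at habs
    norm_num at habs
end
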